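/- arXiv:2203.06466 — 5 statements merged into one kernel-verified Lean document; each statement's English description precedes it below -/
import Mathlib

section
/- Let G be a graph and v a vertex of degree at most 2 in G. If G - v has an (F2, F)-partition, then G has an (F2, F)-partition. -/
open SimpleGraph

/-- `G` contains no cycle of length `n`. -/
def NoCycleLen {V : Type} (G : SimpleGraph V) (n : ℕ) : Prop :=
  ∀ (v : V) (w : G.Walk v v), w.IsCycle → w.length ≠ n

/-- `(V1, V2)` partitions the vertex subset `s`, with `G[V1]` a forest of maximum
degree at most 2 and `G[V2]` a forest. -/
def IsF2FPartOn {V : Type} (G : SimpleGraph V) (s V1 V2 : Set V) : Prop :=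
  V1 ∪ V2 = s ∧ Disjoint V1 V2 ∧
  (G.induce V1).IsAcyclic ∧
  (∀ x : V1, ((G.induce V1).neighborSet x).ncard ≤ 2) ∧
  (G.induce V2).IsAcyclic

namespace F2FAux

lemma two_neighbors_of_cycle {W : Type} {H : SimpleGraph W} {w : W} (c : H.Walk w w)
    (hc : c.IsCycle) : ∃ b b' : W, b ≠ b' ∧ H.Adj w b ∧ H.Adj w b' := by
  cases c with
  | nil => exact absurd rfl hc.ne_nil
  | @cons _ b _ h p =>
    rw [Walk.cons_isCycle_iff] at hc
    obtain ⟨b', hadj, q, hq⟩ := Walk.exists_eq_cons_of_ne h.ne p.reverse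
    refine ⟨b, b', ?_, h, hadj⟩
    rintro rfl
    apply hc.2
    have : s(w, b) ∈ p.reverse.edges := by rw [hq]; simp
    rwa [Walk.edges_reverse, List.mem_reverse] at this

lemma exists_walk_induce {V : Type} (G : SimpleGraph V) (t : Set V) :
    ∀ {a b : V} (p : G.Walk a b) (ha : a ∈ t) (hb : b ∈ t),
      (∀ x ∈ p.support, x ∈ t) →
      ∃ q : (G.induce t).Walk ⟨a, ha⟩ ⟨b, hb⟩,
        q.map (SimpleGraph.Embedding.induce t).toHom = p := by
  intro a b p
  induction p with
  | nil => exact fun ha hb _ => ⟨Walk.nil, rfl⟩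
  | @cons a c b h p ih =>
    intro ha hb hsup
    have hct : c ∈ t := hsup c (by simp)
    obtain ⟨q, hq⟩ := ih hct hb (fun x hx => hsup x (by simp [hx]))
    exact ⟨Walk.cons (by exact h) q, by subst hq; rfl⟩

lemma isAcyclic_of_embedding {W W' : Type} {H : SimpleGraph W} {H' : SimpleGraph W'}
    (f : H ↪g H') (h : H'.IsAcyclic) : H.IsAcyclic := fun _ c hc =>
  h (c.map f.toHom) ((Walk.map_isCycle_iff_of_injective f.injective).mpr hc)

lemma pendant_acyclic {V : Type} [Fintype V] [DecidableEq V] (G : SimpleGraph V) (B : Set V) (v : V)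
    (hB : (G.induce B).IsAcyclic)
    (hN : {x | x ∈ B ∧ G.Adj v x}.ncard ≤ 1) :
    (G.induce (insert v B)).IsAcyclic := by
  intro a c hc
  by_cases hv : (⟨v, Set.mem_insert v B⟩ : ↥(insert v B)) ∈ c.support
  · obtain ⟨b, b', hne, hb, hb'⟩ := two_neighbors_of_cycle _ (hc.rotate hv)
    have h1 : G.Adj v ↑b := hb
    have h2 : G.Adj v ↑b' := hb'
    have hbB : (↑b : V) ∈ B := b.property.resolve_left (fun hh => h1.ne' hh)
    have hb'B : (↑b' : V) ∈ B := b'.property.resolve_left (fun hh => h2.ne' hh)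
    have : 1 < {x | x ∈ B ∧ G.Adj v x}.ncard := by
      rw [Set.one_lt_ncard (Set.toFinite _)]
      exact ⟨↑b, ⟨hbB, h1⟩, ↑b', ⟨hb'B, h2⟩, fun hh => hne (Subtype.ext hh)⟩
    omega
  · have hcG : (c.map (SimpleGraph.Embedding.induce (insert v B)).toHom).IsCycle :=
      (Walk.map_isCycle_iff_of_injective (SimpleGraph.Embedding.induce (G := G) (insert v B)).injective).mpr hc
    have hsup : ∀ x ∈ (c.map (SimpleGraph.Embedding.induce (insert v B)).toHom).support,
        x ∈ B := by
      intro x hx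
      rw [Walk.support_map, List.mem_map] at hx
      obtain ⟨y, hy, rfl⟩ := hx
      refine y.property.resolve_left (fun hh => hv ?_)
      have : y = ⟨v, Set.mem_insert v B⟩ := Subtype.ext hh
      rwa [← this]
    have haB : (↑a : V) ∈ B := hsup _ (Walk.start_mem_support _)
    obtain ⟨q, hq⟩ := exists_walk_induce G B _ haB haB hsup
    exact hB q ((Walk.map_isCycle_iff_of_injective
      (SimpleGraph.Embedding.induce (G := G) B).injective).mp (hq.symm ▸ hcG))

noncomputable def induceInduceIso {V : Type} (G : SimpleGraph V) (s : Set V) (A : Set ↥s) :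
    ((G.induce s).induce A) ≃g G.induce (Subtype.val '' A) where
  toEquiv := Equiv.Set.image Subtype.val A Subtype.val_injective
  map_rel_iff' := Iff.rfl

end F2FAux

namespace F2FAux

lemma degle {V : Type} (G : SimpleGraph V) (s : Set V) (A : Set ↥s)
    (h : ∀ y : ↥A, (((G.induce s).induce A).neighborSet y).ncard ≤ 2) :
    ∀ x : ↥(Subtype.val '' A), ((G.induce (Subtype.val '' A)).neighborSet x).ncard ≤ 2 := by
  intro x
  obtain ⟨y, rfl⟩ := (induceInduceIso G s A).surjective x
  rw [← Nat.card_coe_set_eq,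
    Nat.card_congr ((induceInduceIso G s A).mapNeighborSet y).symm,
    Nat.card_coe_set_eq]
  exact h y

lemma ncard_neighborSet_insert_le {V : Type} [Fintype V] (G : SimpleGraph V) (A : Set V) (v : V)
    (hvA : ∀ x ∈ A, ¬ G.Adj v x)
    (hdegA : ∀ y : ↥A, ((G.induce A).neighborSet y).ncard ≤ 2) :
    ∀ x : ↥(insert v A), ((G.induce (insert v A)).neighborSet x).ncard ≤ 2 := by
  rintro ⟨x, hx⟩
  rcases Set.mem_insert_iff.mp hx with rfl | hxA
  · have hemp : ((G.induce (insert x A)).neighborSet ⟨x, hx⟩) = ∅ := by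
      ext y
      simp only [mem_neighborSet, comap_adj, Function.Embedding.coe_subtype,
        Set.mem_empty_iff_false, iff_false]
      intro had
      rcases Set.mem_insert_iff.mp y.property with h | h
      · exact G.irrefl (h ▸ had)
      · exact hvA _ h had
    rw [hemp, Set.ncard_empty]
    omega
  · have key : Nat.card ((G.induce (insert v A)).neighborSet ⟨x, hx⟩) ≤
        Nat.card ((G.induce A).neighborSet ⟨x, hxA⟩) := by
      have hmem : ∀ y : ((G.induce (insert v A)).neighborSet ⟨x, hx⟩), (↑↑y : V) ∈ A := by
        intro y
        rcases Set.mem_insert_iff.mp (↑y : ↥(insert v A)).property with h | h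
        · exfalso
          have had : G.Adj x ↑↑y := y.property
          exact hvA x hxA (h ▸ had).symm
        · exact h
      refine Nat.card_le_card_of_injective
        (fun y => ⟨⟨(↑↑y : V), hmem y⟩, by exact y.property⟩) ?_
      intro y1 y2 hpq
      have : (↑↑y1 : V) = ↑↑y2 := congrArg (fun z => (↑↑z : V)) hpq
      exact Subtype.ext (Subtype.ext this)
    rw [← Nat.card_coe_set_eq]
    refine key.trans ?_
    rw [Nat.card_coe_set_eq]
    exact hdegA ⟨x, hxA⟩

end F2FAux

open F2FAux in
theorem delete_low_degree_vertex_extend {V : Type} [Fintype V] [DecidableEq V]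
    (G : SimpleGraph V) [DecidableRel G.Adj] (v : V) (hdeg : G.degree v ≤ 2)
    (h : ∃ V1 V2 : Set ↥({v}ᶜ : Set V),
      IsF2FPartOn (G.induce ({v}ᶜ : Set V)) Set.univ V1 V2) :
    ∃ V1 V2 : Set V, IsF2FPartOn G Set.univ V1 V2 := by
  obtain ⟨V1', V2', hU, hD, hA1, hdeg1, hA2⟩ := h
  simp only [IsF2FPartOn]
  classical
  set A : Set V := Subtype.val '' V1' with hA
  set B : Set V := Subtype.val '' V2' with hB
  have hABS : A ∪ B = ({v}ᶜ : Set V) := by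
    rw [hA, hB, ← Set.image_union, hU, Set.image_univ, Subtype.range_coe]
  have hvA : v ∉ A := by
    rintro ⟨y, _, hy⟩
    exact y.property hy
  have hvB : v ∉ B := by
    rintro ⟨y, _, hy⟩
    exact y.property hy
  have hdisj : Disjoint A B := by
    rw [Set.disjoint_left] at hD ⊢
    rintro x ⟨y, hy, rfl⟩ ⟨z, hz, hzy⟩
    exact hD hy (Subtype.val_injective hzy ▸ hz)
  have hAacyc : (G.induce A).IsAcyclic :=
    isAcyclic_of_embedding (induceInduceIso G _ V1').symm.toEmbedding hA1
  have hBacyc : (G.induce B).IsAcyclic :=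
    isAcyclic_of_embedding (induceInduceIso G _ V2').symm.toEmbedding hA2
  have hdegA : ∀ x : ↥A, ((G.induce A).neighborSet x).ncard ≤ 2 := degle G _ V1' hdeg1
  have hnb : ∀ x, G.Adj v x → x ∈ A ∪ B := by
    intro x hx
    rw [hABS]
    exact Set.mem_compl_singleton_iff.mpr hx.ne'
  set M : Set V := {x | x ∈ A ∧ G.Adj v x} with hM
  set N : Set V := {x | x ∈ B ∧ G.Adj v x} with hN
  have hMN : M ∪ N = G.neighborSet v := by
    ext x
    constructor
    · rintro (⟨_, hx⟩ | ⟨_, hx⟩) <;> exact hx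
    · intro hx
      rcases hnb x hx with h | h
      · exact Or.inl ⟨h, hx⟩
      · exact Or.inr ⟨h, hx⟩
  have hMNdisj : Disjoint M N :=
    Set.disjoint_left.mpr (fun x hx hx' => Set.disjoint_left.mp hdisj hx.1 hx'.1)
  have hcard : M.ncard + N.ncard ≤ 2 := by
    have h1 : M.ncard + N.ncard = (G.neighborSet v).ncard := by
      rw [← hMN, Set.ncard_union_eq hMNdisj (Set.toFinite _) (Set.toFinite _)]
    have h2 : (G.neighborSet v).ncard ≤ 2 := by
      rw [← Nat.card_coe_set_eq, Nat.card_eq_fintype_card, G.card_neighborSet_eq_degree]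
      exact hdeg
    omega
  by_cases hNle : N.ncard ≤ 1
  · refine ⟨A, insert v B, ?_, ?_, hAacyc, hdegA, pendant_acyclic G B v hBacyc hNle⟩
    · rw [Set.union_insert, hABS, Set.insert_eq, Set.union_comm, Set.compl_union_self]
    · rw [Set.disjoint_left]
      rintro x hx (rfl | hxB)
      · exact hvA hx
      · exact Set.disjoint_left.mp hdisj hx hxB
  · have hMempty : M = ∅ := by
      rw [← Set.ncard_eq_zero (Set.toFinite _)]
      omega
    have hMnone : ∀ x ∈ A, ¬ G.Adj v x := by
      intro x hx hadj
      exact Set.notMem_empty x (hMempty ▸ (⟨hx, hadj⟩ : x ∈ M))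
    refine ⟨insert v A, B, ?_, ?_,
      pendant_acyclic G A v hAacyc (by rw [← hM, hMempty, Set.ncard_empty]; omega),
      ncard_neighborSet_insert_le G A v hMnone hdegA, hBacyc⟩
    · rw [Set.insert_union, hABS, Set.insert_eq, Set.union_comm, Set.compl_union_self]
    · rw [Set.disjoint_left]
      rintro x (rfl | hxA) hxB
      · exact hvB hxB
      · exact Set.disjoint_left.mp hdisj hxA hxB
end

section
/- Let G be a graph with an (F2, F)-partition (V1, V2) and let v be a vertex not in G whose attachment creates graph G' where v has exactly three neighbors, each of which either lies in V2 or lies in V1 with at most one V1-neighbor. If at least two neighbors of v are in V2, or the (at most one) neighbor of v in V1 is not V1-saturated, then G' has an (F2, F)-partition. -/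
open SimpleGraph

lemma first_edge_mem {V : Type} {G : SimpleGraph V} {a b : V} (w : G.Walk a b) (hw : ¬ w.Nil) :
    s(a, w.getVert 1) ∈ w.edges := by
  cases w with
  | nil => simp at hw
  | cons h q => simp [Walk.getVert_cons_succ, Walk.getVert_zero]

lemma two_le_ncard_of_cycle {W : Type} {H : SimpleGraph W} {x : W}
    (c : H.Walk x x) (hc : c.IsCycle) (hfin : (H.neighborSet x).Finite) :
    2 ≤ (H.neighborSet x).ncard := by
  cases c with
  | nil => exact absurd hc Walk.IsCycle.not_of_nil
  | cons h p =>
    rw [Walk.cons_isCycle_iff] at hc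
    obtain ⟨hp, he⟩ := hc
    rename_i y
    -- p : Walk y x, h : Adj x y
    have hplen : 0 < p.length := by
      have := (Walk.cons_isCycle_iff p h).mpr ⟨hp, he⟩ |>.three_le_length
      simp [Walk.length_cons] at this; omega
    have hrnil : ¬ p.reverse.Nil := by
      rw [Walk.not_nil_iff_lt_length, Walk.length_reverse]; exact hplen
    set z := p.reverse.getVert 1 with hz
    have hadjz : H.Adj x z := Walk.adj_snd hrnil
    have hzy : z ≠ y := by
      intro hzy
      have := first_edge_mem p.reverse hrnil
      rw [Walk.edges_reverse, List.mem_reverse] at this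
      rw [← hz] at this
      rw [hzy] at this
      exact he this
    have hsub : ({y, z} : Set W) ⊆ H.neighborSet x := by
      intro u hu
      rcases hu with h1 | h2
      · subst h1; exact h
      · simp at h2; subst h2; exact hadjz
    calc 2 = ({y, z} : Set W).ncard := (Set.ncard_pair (Ne.symm hzy)).symm
    _ ≤ (H.neighborSet x).ncard := Set.ncard_le_ncard hsub hfin

lemma ncard_neighborSet_induce {V : Type} (G : SimpleGraph V) (s : Set V) (x : V) (hx : x ∈ s) :
    ((G.induce s).neighborSet ⟨x, hx⟩).ncard = (G.neighborSet x ∩ s).ncard := by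
  rw [← Set.ncard_image_of_injective _ Subtype.val_injective]
  congr 1
  ext y
  constructor
  · rintro ⟨⟨y', hy'⟩, hadj, rfl⟩
    exact ⟨hadj, hy'⟩
  · rintro ⟨hadj, hy⟩
    exact ⟨⟨y, hy⟩, hadj, rfl⟩

lemma shrink_walk {V : Type} {G : SimpleGraph V} {s t : Set V} {a b : t}
    (w : (G.induce t).Walk a b) (h : ∀ x ∈ w.support, (x : V) ∈ s) :
    ∃ (ha : (a : V) ∈ s) (hb : (b : V) ∈ s) (w' : (G.induce s).Walk ⟨a, ha⟩ ⟨b, hb⟩),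
      w'.map (Embedding.induce s).toHom = w.map (Embedding.induce t).toHom := by
  induction w with
  | nil =>
    refine ⟨h _ (by simp), h _ (by simp), Walk.nil, by simp⟩
  | cons hadj p ih =>
    obtain ⟨hc, hb, p', hmap⟩ := ih (fun x hx => h x (by simp [hx]))
    refine ⟨h _ (Walk.start_mem_support _), hb, Walk.cons (by simpa using hadj) p', ?_⟩
    simp only [Walk.map_cons]
    congr 1

theorem attach_degree_three_vertex {V : Type} [Fintype V] [DecidableEq V]
    (G' : SimpleGraph V) [DecidableRel G'.Adj] (v : V)
    (hdeg : G'.degree v = 3)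
    (V1 V2 : Set V) (hpart : IsF2FPartOn G' ({v}ᶜ : Set V) V1 V2)
    (hnbr : ∀ u ∈ G'.neighborSet v,
      u ∈ V2 ∨ (u ∈ V1 ∧ (G'.neighborSet u ∩ V1).ncard ≤ 1))
    (hcond : 2 ≤ (G'.neighborSet v ∩ V2).ncard ∨
      ((G'.neighborSet v ∩ V1).ncard ≤ 1 ∧
        ∀ u ∈ G'.neighborSet v ∩ V1, (G'.neighborSet u ∩ V1).ncard ≤ 1)) :
    ∃ W1 W2 : Set V, IsF2FPartOn G' Set.univ W1 W2 := by
  obtain ⟨hU, hdisj, hac1, hdeg1, hac2⟩ := hpart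
  set N := G'.neighborSet v with hN
  have hNsub : N ⊆ V1 ∪ V2 := by
    intro y hy
    have hyv : y ≠ v := fun h => G'.irrefl (h ▸ hy)
    rw [hU]
    exact hyv
  have hN3 : N.ncard = 3 := by
    rw [hN, Set.ncard_eq_toFinset_card', ← neighborFinset_def]
    exact hdeg
  have hsum : (N ∩ V1).ncard + (N ∩ V2).ncard = 3 := by
    rw [← Set.ncard_union_eq (hdisj.mono Set.inter_subset_right Set.inter_subset_right)
      (Set.toFinite _) (Set.toFinite _), ← Set.inter_union_distrib_left,
      Set.inter_eq_left.mpr hNsub, hN3]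
  have hA : (N ∩ V1).ncard ≤ 1 := by
    rcases hcond with h | h
    · omega
    · exact h.1
  set W1 := insert v V1 with hW1
  have hvW1 : v ∈ W1 := Set.mem_insert v V1
  have hNW1 : N ∩ W1 = N ∩ V1 := by
    ext y
    simp only [hW1, Set.mem_inter_iff, Set.mem_insert_iff]
    constructor
    · rintro ⟨hy, rfl | hy2⟩
      · exact absurd hy (G'.irrefl)
      · exact ⟨hy, hy2⟩
    · rintro ⟨hy, hy2⟩
      exact ⟨hy, Or.inr hy2⟩
  have hdegv' : ((G'.induce W1).neighborSet ⟨v, hvW1⟩).ncard ≤ 1 := by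
    rw [ncard_neighborSet_induce G' W1 v hvW1, hNW1]
    exact hA
  refine ⟨W1, V2, ?_, ?_, ?_, ?_, hac2⟩
  · rw [hW1, Set.insert_union, hU]
    ext y
    by_cases h : y = v <;> simp [h]
  · refine Set.disjoint_left.mpr ?_
    intro y hy hy2
    rcases Set.mem_insert_iff.mp hy with rfl | hy1
    · have : y ∈ ({y}ᶜ : Set V) := hU ▸ Set.mem_union_right _ hy2
      simp at this
    · exact Set.disjoint_left.mp hdisj hy1 hy2
  · -- acyclicity of induce W1
    intro x c hc
    by_cases hvc : (⟨v, hvW1⟩ : W1) ∈ c.support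
    · have h2 := two_le_ncard_of_cycle _ (hc.rotate hvc) (Set.toFinite _)
      omega
    · have hsupp : ∀ y ∈ c.support, (y : V) ∈ V1 := by
        intro y hy
        rcases Set.mem_insert_iff.mp y.2 with h | h
        · exact absurd hy (by rw [show y = ⟨v, hvW1⟩ from Subtype.ext h] at hy ⊢; exact hvc)
        · exact h
      obtain ⟨ha, hb, w', hmap⟩ := shrink_walk c hsupp
      have hcyc : (w'.map (Embedding.induce (V1 : Set V)).toHom).IsCycle := by
        rw [hmap]
        exact hc.map (Embedding.induce (G := G') W1).injective
      exact hac1 w' ((Walk.map_isCycle_iff_of_injective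
        (Embedding.induce (G := G') V1).injective).mp hcyc)
  · rintro ⟨x, hx⟩
    rcases Set.mem_insert_iff.mp hx with rfl | hxV1
    · exact le_trans hdegv' (by norm_num)
    · rw [ncard_neighborSet_induce G' W1 x hx]
      by_cases hxv : G'.Adj x v
      · rcases hnbr x hxv.symm with hx2 | ⟨_, hle⟩
        · exact absurd hx2 (fun h => Set.disjoint_left.mp hdisj hxV1 h)
        · have hsub : G'.neighborSet x ∩ W1 ⊆ insert v (G'.neighborSet x ∩ V1) := by
            rintro y ⟨hy1, hy2⟩
            rcases Set.mem_insert_iff.mp hy2 with rfl | hy2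
            · exact Set.mem_insert _ _
            · exact Set.mem_insert_of_mem _ ⟨hy1, hy2⟩
          calc (G'.neighborSet x ∩ W1).ncard
              ≤ (insert v (G'.neighborSet x ∩ V1)).ncard :=
                Set.ncard_le_ncard hsub (Set.toFinite _)
            _ ≤ (G'.neighborSet x ∩ V1).ncard + 1 := Set.ncard_insert_le _ _
            _ ≤ 2 := by omega
      · have heq : G'.neighborSet x ∩ W1 = G'.neighborSet x ∩ V1 := by
          ext y
          simp only [hW1, Set.mem_inter_iff, Set.mem_insert_iff]
          constructor
          · rintro ⟨hy, rfl | hy2⟩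
            · exact absurd hy hxv
            · exact ⟨hy, hy2⟩
          · rintro ⟨hy, hy2⟩
            exact ⟨hy, Or.inr hy2⟩
        rw [heq]
        have := hdeg1 ⟨x, hxV1⟩
        rwa [ncard_neighborSet_induce G' V1 x hxV1] at this
end

section
/- Let G be a vertex-minimal planar graph without 4-cycles and 6-cycles having no (F2, F)-partition. Then every vertex of degree 3 in G has a neighbor of degree at least 5. -/
open SimpleGraph

/-- A combinatorial plane embedding of `G`: a finite set of faces, each with a closed
boundary walk, satisfying the handshaking identity for faces and Euler's formula. -/
structure PlaneEmbedding {V : Type} [Fintype V] [DecidableEq V]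
    (G : SimpleGraph V) [DecidableRel G.Adj] : Type 1 where
  Face : Type
  faceFintype : Fintype Face
  boundary : Face → List V
  boundary_ne : ∀ f, boundary f ≠ []
  boundary_walk : ∀ f, (boundary f ++ (boundary f).take 1).Chain' G.Adj
  edge_count : ∑ f ∈ (@Finset.univ Face faceFintype), (boundary f).length
      = 2 * G.edgeFinset.card
  euler : (Fintype.card V : ℤ) - G.edgeFinset.card + (@Fintype.card Face faceFintype) = 2

/-- `G` is planar: it admits a plane embedding. -/
def SimpleGraph.Planar {V : Type} [Fintype V] [DecidableEq V]
    (G : SimpleGraph V) [DecidableRel G.Adj] : Prop :=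
  Nonempty (PlaneEmbedding G)

section Aux

set_option linter.unusedSectionVars false

variable {V : Type} {G : SimpleGraph V}

/-- Every cycle of `G` leaves the set `A`. -/
def AcyOn (G : SimpleGraph V) (A : Set V) : Prop :=
  ∀ ⦃v : V⦄ (w : G.Walk v v), w.IsCycle → ∃ x ∈ w.support, x ∉ A

/-- The neighbors of `x` inside `A`. -/
def NB (G : SimpleGraph V) (A : Set V) (x : V) : Set V := {y | y ∈ A ∧ G.Adj x y}

lemma acyclic_of_injHom {W : Type} {H : SimpleGraph W} (f : G →g H)
    (hf : Function.Injective f) (hH : H.IsAcyclic) : G.IsAcyclic :=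
  fun _ w hw => hH (w.map f) (((SimpleGraph.Walk.map_isCycle_iff_of_injective hf)).2 hw)

def liftWalk {A : Set V} :
    ∀ {a b : V} (w : G.Walk a b), (∀ x ∈ w.support, x ∈ A) →
      ∀ (ha : a ∈ A) (hb : b ∈ A), (G.induce A).Walk ⟨a, ha⟩ ⟨b, hb⟩
  | _, _, Walk.nil, _, _, _ => Walk.nil
  | _, _, Walk.cons hadj p, h, _, hb =>
      Walk.cons (by exact hadj)
        (liftWalk p (fun x hx => h x (List.mem_cons_of_mem _ hx)) (h _ (by simp)) hb)

lemma liftWalk_map {A : Set V} {a b : V} (w : G.Walk a b) (h : ∀ x ∈ w.support, x ∈ A)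
    (ha : a ∈ A) (hb : b ∈ A) :
    (liftWalk w h ha hb).map (SimpleGraph.Embedding.induce A).toHom = w := by
  induction w with
  | nil => rfl
  | cons hadj p ih => simp only [liftWalk]; exact congrArg (Walk.cons hadj) (ih _ _ hb)

lemma induce_acyclic_iff {A : Set V} : (G.induce A).IsAcyclic ↔ AcyOn G A := by
  constructor
  · intro hac v w hw
    by_contra hco
    push_neg at hco
    have hv : v ∈ A := hco v w.start_mem_support
    refine hac (liftWalk w hco hv hv) ?_
    have heq := liftWalk_map w hco hv hv
    rw [← Walk.map_isCycle_iff_of_injective (f := (SimpleGraph.Embedding.induce A).toHom)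
      (fun a b hab => Subtype.ext hab), heq]
    exact hw
  · intro hA v w hw
    obtain ⟨x, hx, hxA⟩ := hA (w.map (SimpleGraph.Embedding.induce A).toHom)
      (hw.map (fun a b hab => Subtype.ext hab))
    apply hxA
    rw [Walk.support_map] at hx
    obtain ⟨y, _, rfl⟩ := List.mem_map.1 hx
    exact y.2

lemma exists_last_nbr : ∀ {y x : V} (p : G.Walk y x), ¬ p.Nil →
    ∃ z ∈ p.support, G.Adj z x ∧ s(z, x) ∈ p.edges := by
  intro y x p
  induction p with
  | nil => intro h; exact absurd Walk.nil_nil h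
  | @cons a b c hadj q ih =>
    intro _
    by_cases hq : q.Nil
    · cases q with
      | nil => exact ⟨a, by simp, hadj, by simp⟩
      | cons _ _ => simp at hq
    · obtain ⟨z, hz, h1, h2⟩ := ih hq
      exact ⟨z, by simp [hz], h1, by simp [h2]⟩

lemma two_nbrs {x : V} {w : G.Walk x x} (hw : w.IsCycle) :
    ∃ y z, y ≠ z ∧ G.Adj x y ∧ G.Adj x z ∧ y ∈ w.support ∧ z ∈ w.support := by
  cases w with
  | nil => exact absurd hw (by simp [Walk.IsCycle])
  | @cons _ b _ hadj p =>
    have hpnil : ¬ p.Nil := by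
      intro h
      have h3 := hw.three_le_length
      rw [Walk.nil_iff_length_eq] at h
      simp [h] at h3
    obtain ⟨z, hz, h1, h2⟩ := exists_last_nbr p hpnil
    have hne : b ≠ z := by
      rintro rfl
      have hnod := hw.edges_nodup
      rw [Walk.edges_cons, List.nodup_cons] at hnod
      exact hnod.1 (by rwa [Sym2.eq_swap])
    exact ⟨b, z, hne, hadj, h1.symm, by simp, by simp [hz]⟩

variable [Fintype V] [DecidableEq V]

lemma AcyOn.mono' {A B : Set V} (h : A ⊆ B) (hB : AcyOn G B) : AcyOn G A := by
  intro v w hw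
  obtain ⟨x, hx, hxB⟩ := hB w hw
  exact ⟨x, hx, fun hA => hxB (h hA)⟩

lemma acyOn_insert {A : Set V} {a : V} (hA : AcyOn G A) (h1 : (NB G A a).ncard ≤ 1) :
    AcyOn G (insert a A) := by
  intro v w hw
  by_contra hco
  push_neg at hco
  by_cases hmem : a ∈ w.support
  · have hw' := hw.rotate hmem
    obtain ⟨y, z, hyz, hay, haz, hy, hz⟩ := two_nbrs hw'
    have hsub : ∀ x ∈ (w.rotate a hmem).support, x ∈ insert a A := by
      intro x hx
      rw [Walk.support_eq_cons] at hx
      rcases List.mem_cons.1 hx with rfl | hx'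
      · exact Set.mem_insert _ _
      · have := (w.support_rotate a hmem).mem_iff.1 hx'
        exact hco x (List.mem_of_mem_tail this)
    have hyA : y ∈ A := by
      rcases hsub y hy with h | h
      · exact absurd h.symm hay.ne
      · exact h
    have hzA : z ∈ A := by
      rcases hsub z hz with h | h
      · exact absurd h.symm haz.ne
      · exact h
    have hpair : ({y, z} : Set V) ⊆ NB G A a := by
      rintro t (rfl | rfl)
      exacts [⟨hyA, hay⟩, ⟨hzA, haz⟩]
    have : 2 ≤ (NB G A a).ncard := by
      rw [← Set.ncard_pair hyz]
      exact Set.ncard_le_ncard hpair (Set.toFinite _)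
    omega
  · obtain ⟨x, hx, hxA⟩ := hA w hw
    rcases hco x hx with rfl | h
    exacts [hmem hx, hxA h]

lemma induce_nbr_ncard {W : Type} (H : SimpleGraph W) (A : Set W) (x : ↥A) :
    ((H.induce A).neighborSet x).ncard = (NB H A ↑x).ncard := by
  have himg : NB H A ↑x = Subtype.val '' ((H.induce A).neighborSet x) := by
    ext y
    simp only [NB, Set.mem_setOf_eq, Set.mem_image, mem_neighborSet, comap_adj,
      Function.Embedding.coe_subtype]
    constructor
    · rintro ⟨hy, hadj⟩; exact ⟨⟨y, hy⟩, by exact hadj, rfl⟩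
    · rintro ⟨⟨y', hy'⟩, hadj, rfl⟩; exact ⟨hy', by exact hadj⟩
  rw [himg, Set.ncard_image_of_injective _ Subtype.val_injective]

def toNested {s : Set V} (V1 : Set ↥s) :
    G.induce (Subtype.val '' V1) →g (G.induce s).induce V1 where
  toFun y := ⟨⟨y.1, by obtain ⟨a, _, h⟩ := y.2; exact h ▸ a.2⟩,
    by obtain ⟨a, ha, h⟩ := y.2
       convert ha using 1
       exact (Subtype.ext h.symm)⟩
  map_rel' := fun h => by exact h

lemma toNested_inj {s : Set V} (V1 : Set ↥s) : Function.Injective (toNested (G := G) V1) :=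
  fun a b h => Subtype.ext (congrArg (fun z => z.1.1) h)

lemma extract {s : Set V} {V1 V2 : Set ↥s}
    (h : IsF2FPartOn (G.induce s) Set.univ V1 V2) :
    ∃ W1 W2 : Set V, W1 ∪ W2 = s ∧ Disjoint W1 W2 ∧ AcyOn G W1 ∧
      (∀ x ∈ W1, (NB G W1 x).ncard ≤ 2) ∧ AcyOn G W2 := by
  obtain ⟨hu, hd, ha1, hn1, ha2⟩ := h
  have himg : ∀ (A : Set ↥s) (a : ↥s),
      NB G (Subtype.val '' A) ↑a = Subtype.val '' (NB (G.induce s) A a) := by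
    intro A a
    ext y
    simp only [NB, Set.mem_setOf_eq, Set.mem_image]
    constructor
    · rintro ⟨⟨b, hb, rfl⟩, hadj⟩; exact ⟨b, ⟨hb, by exact hadj⟩, rfl⟩
    · rintro ⟨b, ⟨hb, hadj⟩, rfl⟩; exact ⟨⟨b, hb, rfl⟩, by exact hadj⟩
  refine ⟨Subtype.val '' V1, Subtype.val '' V2, ?_, ?_, ?_, ?_, ?_⟩
  · rw [← Set.image_union, hu, Subtype.coe_image_univ]
  · exact Set.disjoint_image_of_injective Subtype.val_injective hd
  · exact induce_acyclic_iff.1 (acyclic_of_injHom _ (toNested_inj V1) ha1)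
  · rintro x ⟨a, ha, rfl⟩
    have h2 := hn1 ⟨a, ha⟩
    rw [induce_nbr_ncard] at h2
    rw [himg V1 a, Set.ncard_image_of_injective _ Subtype.val_injective]
    exact h2
  · exact induce_acyclic_iff.1 (acyclic_of_injHom _ (toNested_inj V2) ha2)

lemma build {s W1 W2 : Set V} (hu : W1 ∪ W2 = s) (hd : Disjoint W1 W2) (h1 : AcyOn G W1)
    (hn : ∀ x ∈ W1, (NB G W1 x).ncard ≤ 2) (h2 : AcyOn G W2) : IsF2FPartOn G s W1 W2 :=
  ⟨hu, hd, induce_acyclic_iff.2 h1,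
    fun x => by rw [induce_nbr_ncard]; exact hn x x.2, induce_acyclic_iff.2 h2⟩

lemma NB_insert_self (A : Set V) (a : V) : NB G (insert a A) a = NB G A a := by
  ext y
  simp only [NB, Set.mem_setOf_eq, Set.mem_insert_iff]
  constructor
  · rintro ⟨rfl | h, hadj⟩
    · exact absurd rfl hadj.ne
    · exact ⟨h, hadj⟩
  · exact fun ⟨h, hadj⟩ => ⟨Or.inr h, hadj⟩

lemma NB_insert_of_not_adj {x a : V} (A : Set V) (h : ¬ G.Adj x a) :
    NB G (insert a A) x = NB G A x := by
  ext y
  simp only [NB, Set.mem_setOf_eq, Set.mem_insert_iff]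
  constructor
  · rintro ⟨rfl | hy, hadj⟩
    · exact absurd hadj h
    · exact ⟨hy, hadj⟩
  · exact fun ⟨hy, hadj⟩ => ⟨Or.inr hy, hadj⟩

lemma NB_insert_subset {x a : V} (A : Set V) :
    NB G (insert a A) x ⊆ insert a (NB G A x) := by
  rintro y ⟨rfl | hy, hadj⟩
  · exact Set.mem_insert _ _
  · exact Set.mem_insert_of_mem _ ⟨hy, hadj⟩

lemma NB_mono {x : V} {A B : Set V} (h : A ⊆ B) : NB G A x ⊆ NB G B x :=
  fun _ hy => ⟨h hy.1, hy.2⟩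

lemma ncard_neighborSet_eq_degree [DecidableRel G.Adj] (u : V) :
    (G.neighborSet u).ncard = G.degree u := by
  rw [← SimpleGraph.card_neighborSet_eq_degree, ← Nat.card_coe_set_eq,
    Nat.card_eq_fintype_card]

end Aux

theorem minimal_counterexample_3vertex_has_5plus_neighbor {V : Type} [Fintype V]
    [DecidableEq V] (G : SimpleGraph V) [DecidableRel G.Adj]
    (hplanar : G.Planar) (h4 : NoCycleLen G 4) (h6 : NoCycleLen G 6)
    (hno : ¬ ∃ V1 V2 : Set V, IsF2FPartOn G Set.univ V1 V2)
    (hmin : ∀ s : Set V, s ≠ Set.univ →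
      ∃ V1 V2 : Set ↥s, IsF2FPartOn (G.induce s) Set.univ V1 V2) :
    ∀ v : V, G.degree v = 3 → ∃ u, G.Adj v u ∧ 5 ≤ G.degree u := by
  intro v hdeg
  by_contra hcon
  push_neg at hcon
  set s : Set V := {v}ᶜ with hs
  have hsne : s ≠ Set.univ := by
    intro h
    have hv : v ∈ s := h ▸ Set.mem_univ v
    rw [hs] at hv
    exact hv rfl
  obtain ⟨V1, V2, hpart⟩ := hmin s hsne
  obtain ⟨W1, W2, hu, hd, ha1, hn1, ha2⟩ := extract hpart
  have hvs : v ∉ s := by simp [hs]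
  have hW1s : W1 ⊆ s := hu ▸ Set.subset_union_left
  have hW2s : W2 ⊆ s := hu ▸ Set.subset_union_right
  have hvW1 : v ∉ W1 := fun h => hvs (hW1s h)
  have hvW2 : v ∉ W2 := fun h => hvs (hW2s h)
  have hdisN : Disjoint (NB G W1 v) (NB G W2 v) :=
    Set.disjoint_of_subset (fun _ h => h.1) (fun _ h => h.1) hd
  have hNeq : G.neighborSet v = NB G W1 v ∪ NB G W2 v := by
    ext y
    simp only [mem_neighborSet, NB, Set.mem_union, Set.mem_setOf_eq]
    constructor
    · intro h
      have hys : y ∈ W1 ∪ W2 := by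
        rw [hu, hs]
        simpa using h.ne'
      rcases hys with h1 | h2
      exacts [Or.inl ⟨h1, h⟩, Or.inr ⟨h2, h⟩]
    · rintro (⟨_, h⟩ | ⟨_, h⟩) <;> exact h
  have hsplit : (NB G W1 v).ncard + (NB G W2 v).ncard = 3 := by
    rw [← Set.ncard_union_eq hdisN (Set.toFinite _) (Set.toFinite _), ← hNeq,
      ncard_neighborSet_eq_degree, hdeg]
  apply hno
  by_cases hc1 : (NB G W2 v).ncard ≤ 1
  · refine ⟨W1, insert v W2, build ?_ ?_ ha1 hn1 (acyOn_insert ha2 hc1)⟩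
    · rw [Set.union_insert, hu, hs]
      ext y
      by_cases h : y = v <;> simp [h]
    · rw [Set.disjoint_left]
      intro a ha hb
      rcases hb with rfl | h
      exacts [hvW1 ha, Set.disjoint_left.1 hd ha h]
  · have hc2 : (NB G W1 v).ncard ≤ 1 := by omega
    by_cases hc3 : ∃ u ∈ NB G W1 v, 2 ≤ (NB G W1 u).ncard
    · -- case B2
      obtain ⟨u, ⟨huW1, hadjvu⟩, h2u⟩ := hc3
      have hNW1v : NB G W1 v = {u} := by
        apply Set.eq_singleton_iff_unique_mem.2
        refine ⟨⟨huW1, hadjvu⟩, fun y hy => ?_⟩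
        by_contra hne
        have : 2 ≤ (NB G W1 v).ncard := by
          rw [← Set.ncard_pair hne]
          exact Set.ncard_le_ncard (by rintro t (rfl | rfl); exacts [hy, ⟨huW1, hadjvu⟩])
            (Set.toFinite _)
        omega
      have hdu : G.degree u ≤ 4 := by have := hcon u hadjvu; omega
      have hvnotin : v ∉ NB G W1 u ∪ NB G W2 u := by
        rintro (⟨h, _⟩ | ⟨h, _⟩)
        exacts [hvW1 h, hvW2 h]
      have hdisNu : Disjoint (NB G W1 u) (NB G W2 u) :=
        Set.disjoint_of_subset (fun _ h => h.1) (fun _ h => h.1) hd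
      have hsubNu : insert v (NB G W1 u ∪ NB G W2 u) ⊆ G.neighborSet u := by
        rintro y (rfl | (⟨_, h⟩ | ⟨_, h⟩))
        exacts [hadjvu.symm, h, h]
      have hNW2u : (NB G W2 u).ncard ≤ 1 := by
        have hcount : 1 + ((NB G W1 u).ncard + (NB G W2 u).ncard) ≤ G.degree u := by
          rw [← ncard_neighborSet_eq_degree]
          calc 1 + ((NB G W1 u).ncard + (NB G W2 u).ncard)
              = (insert v (NB G W1 u ∪ NB G W2 u)).ncard := by
                rw [Set.ncard_insert_of_notMem hvnotin (Set.toFinite _),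
                  Set.ncard_union_eq hdisNu (Set.toFinite _) (Set.toFinite _)]
                omega
            _ ≤ (G.neighborSet u).ncard := Set.ncard_le_ncard hsubNu (Set.toFinite _)
        omega
      have hNdiff : NB G (W1 \ {u}) v = ∅ := by
        ext y
        simp only [NB, Set.mem_setOf_eq, Set.mem_diff, Set.mem_singleton_iff,
          Set.mem_empty_iff_false, iff_false]
        rintro ⟨⟨hyW1, hyne⟩, hadj⟩
        exact hyne (by have : y ∈ NB G W1 v := ⟨hyW1, hadj⟩; rwa [hNW1v] at this)
      have hune : u ≠ v := fun h => hvW1 (h ▸ huW1)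
      refine ⟨insert v (W1 \ {u}), insert u W2, build ?_ ?_ ?_ ?_ (acyOn_insert ha2 hNW2u)⟩
      · ext y
        simp only [Set.mem_union, Set.mem_insert_iff, Set.mem_diff, Set.mem_singleton_iff,
          Set.mem_univ, iff_true]
        by_cases hyv : y = v
        · exact Or.inl (Or.inl hyv)
        · have : y ∈ W1 ∪ W2 := by rw [hu, hs]; simpa using hyv
          rcases this with h1 | h2
          · by_cases hyu : y = u
            · exact Or.inr (Or.inl hyu)
            · exact Or.inl (Or.inr ⟨h1, hyu⟩)
          · exact Or.inr (Or.inr h2)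
      · rw [Set.disjoint_left]
        rintro a (rfl | ⟨haW1, hane⟩) hb
        · rcases hb with rfl | h
          exacts [hune rfl, hvW2 h]
        · rcases hb with rfl | h
          exacts [hane rfl, Set.disjoint_left.1 hd haW1 h]
      · exact acyOn_insert (ha1.mono' Set.diff_subset) (by rw [hNdiff]; simp)
      · rintro x (rfl | ⟨hxW1, hxne⟩)
        · rw [NB_insert_self, hNdiff]
          simp
        · have hnadj : ¬ G.Adj x v := by
            intro h
            have : x ∈ NB G W1 v := ⟨hxW1, h.symm⟩
            rw [hNW1v] at this
            exact hxne this
          rw [NB_insert_of_not_adj _ hnadj]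
          exact le_trans (Set.ncard_le_ncard (NB_mono Set.diff_subset) (Set.toFinite _))
            (by
              have h2 := hn1 x hxW1
              calc (NB G W1 x).ncard ≤ (NB G W1 x).ncard := le_rfl
                _ ≤ 2 := h2)
    · -- case B1
      push_neg at hc3
      refine ⟨insert v W1, W2, build ?_ ?_ (acyOn_insert ha1 hc2) ?_ ha2⟩
      · rw [Set.insert_union, hu, hs]
        ext y
        by_cases h : y = v <;> simp [h]
      · rw [Set.disjoint_left]
        rintro a (rfl | ha) hb
        exacts [hvW2 hb, Set.disjoint_left.1 hd ha hb]
      · rintro x (rfl | hxW1)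
        · rw [NB_insert_self]
          omega
        · by_cases hadj : G.Adj x v
          · have hx1 : (NB G W1 x).ncard ≤ 1 := by
              have := hc3 x ⟨hxW1, hadj.symm⟩
              omega
            calc (NB G (insert v W1) x).ncard
                ≤ (insert v (NB G W1 x)).ncard :=
                  Set.ncard_le_ncard (NB_insert_subset _) (Set.toFinite _)
              _ ≤ (NB G W1 x).ncard + 1 := Set.ncard_insert_le _ _
              _ ≤ 2 := by omega
          · rw [NB_insert_of_not_adj _ hadj]
            exact hn1 x hxW1
end

section
/- Let G be a vertex-minimal planar graph without 4-cycles and 6-cycles having no (F2, F)-partition, embedded in the plane. Then no vertex of degree 5 is incident to a poor 3-face. -/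
open SimpleGraph

namespace PlaneEmbedding

variable {V : Type} [Fintype V] [DecidableEq V] {G : SimpleGraph V} [DecidableRel G.Adj]

/-- The length of the boundary walk of a face. -/
def faceLen (E : PlaneEmbedding G) (f : E.Face) : ℕ := (E.boundary f).length

/-- A vertex is incident to a face if it lies on the boundary walk. -/
def IncidentVF (E : PlaneEmbedding G) (v : V) (f : E.Face) : Prop := v ∈ E.boundary f

/-- The edges of the boundary walk of a face (cyclically consecutive pairs). -/
def faceEdges (E : PlaneEmbedding G) (f : E.Face) : List (Sym2 V) :=
  ((E.boundary f).zip ((E.boundary f).rotate 1)).map fun p => s(p.1, p.2)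

/-- Two faces are adjacent if they are distinct and share an edge. -/
def FacesAdj (E : PlaneEmbedding G) (f g : E.Face) : Prop :=
  f ≠ g ∧ ∃ e, e ∈ E.faceEdges f ∧ e ∈ E.faceEdges g

/-- `n_i(v)`: the number of faces of length `i` incident to `v`. -/
noncomputable def nIncident (E : PlaneEmbedding G) (i : ℕ) (v : V) : ℕ :=
  {f : E.Face | E.faceLen f = i ∧ E.IncidentVF v f}.ncard

/-- `m_i(v)`: the number of pendent `i`-faces of `v`, i.e. faces of length `i` not
incident to `v` but incident to a 3-vertex adjacent to `v`. -/
noncomputable def mPendent (E : PlaneEmbedding G) (i : ℕ) (v : V) : ℕ :=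
  {f : E.Face | E.faceLen f = i ∧ ¬ E.IncidentVF v f ∧
    ∃ u, G.Adj v u ∧ G.degree u = 3 ∧ E.IncidentVF u f}.ncard

/-- A terrible 3-vertex of a face `f`: a 3-vertex on `f` with a neighbor of degree
at most 4 not on `f`. -/
def Terrible (E : PlaneEmbedding G) (f : E.Face) (u : V) : Prop :=
  G.degree u = 3 ∧ E.IncidentVF u f ∧
    ∃ w, G.Adj u w ∧ ¬ E.IncidentVF w f ∧ G.degree w ≤ 4

/-- A poor 3-face: a 3-face incident to two terrible 3-vertices. -/
def PoorFace (E : PlaneEmbedding G) (f : E.Face) : Prop :=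
  E.faceLen f = 3 ∧ ∃ u₁ u₂, u₁ ≠ u₂ ∧ E.Terrible f u₁ ∧ E.Terrible f u₂

end PlaneEmbedding


section Aux
set_option linter.unusedSectionVars false
variable {V : Type} (G : SimpleGraph V)

def valHom (S : Set V) : G.induce S →g G := ⟨Subtype.val, fun h => h⟩

def CycFree (S : Set V) : Prop :=
  ∀ (x : V) (c : G.Walk x x), c.IsCycle → ¬ (∀ z ∈ c.support, z ∈ S)

def Conn (S : Set V) (x y : V) : Prop :=
  ∃ w : G.Walk x y, ∀ z ∈ w.support, z ∈ S

def liftW (S : Set V) : ∀ {x y : V} (w : G.Walk x y) (_hx : x ∈ S) (_hy : y ∈ S)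
    (_hS : ∀ z ∈ w.support, z ∈ S), (G.induce S).Walk ⟨x, _hx⟩ ⟨y, _hy⟩
  | _, _, Walk.nil, _, _, _ => Walk.nil
  | _, _, Walk.cons h w, hx, hy, hS =>
      Walk.cons (by exact h) (liftW S w (hS _ (by simp)) hy (fun z hz => hS z (by simp [hz])))

lemma liftW_map (S : Set V) {x y : V} (w : G.Walk x y) (hx : x ∈ S) (hy : y ∈ S)
    (hS : ∀ z ∈ w.support, z ∈ S) :
    (liftW G S w hx hy hS).map (valHom G S) = w := by
  induction w with
  | nil => rfl
  | cons h w ih => exact congrArg (Walk.cons h) (ih _ _ _)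

set_option linter.unusedSectionVars false

lemma acy_iff_cycFree (S : Set V) : (G.induce S).IsAcyclic ↔ CycFree G S := by
  constructor
  · intro h x c hc hS
    have hx := hS _ c.start_mem_support
    have hlift : ((liftW G S c hx hx hS).map (valHom G S)).IsCycle := by
      rwa [liftW_map]
    exact h _ ((Walk.map_isCycle_iff_of_injective Subtype.val_injective).mp hlift)
  · intro h x c hc
    exact h x.1 (c.map (valHom G S)) (hc.map Subtype.val_injective)
      (by intro z hz
          have hz : z ∈ c.support.map (valHom G S) := by
            convert hz using 1; exact (Walk.support_map _ _).symm
          obtain ⟨⟨z', hz'⟩, _, rfl⟩ := List.mem_map.mp hz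
          exact hz')

def nset (S : Set V) (x : V) : Set V := {y ∈ S | G.Adj x y}

noncomputable def nd (S : Set V) (x : V) : ℕ := (nset G S x).ncard

lemma mem_nset {S : Set V} {x y : V} : y ∈ nset G S x ↔ y ∈ S ∧ G.Adj x y := Iff.rfl

lemma ndeg_eq (S : Set V) (x : V) (hx : x ∈ S) :
    ((G.induce S).neighborSet ⟨x, hx⟩).ncard = nd G S x := by
  rw [← Set.ncard_image_of_injective _ (Subtype.val_injective (p := (· ∈ S)))]
  congr 1
  ext y
  simp only [Set.mem_image, mem_nset]
  constructor
  · rintro ⟨⟨y', hy'⟩, hadj, rfl⟩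
    exact ⟨hy', hadj⟩
  · rintro ⟨hyS, hadj⟩
    exact ⟨⟨y, hyS⟩, hadj, rfl⟩

lemma liftW_support (S : Set V) {x y : V} (w : G.Walk x y) (hx : x ∈ S) (hy : y ∈ S)
    (hS : ∀ z ∈ w.support, z ∈ S) :
    (liftW G S w hx hy hS).support.map Subtype.val = w.support := by
  have := congrArg Walk.support (liftW_map G S w hx hy hS)
  rwa [Walk.support_map] at this

lemma trans_part {s : Set V} (V1 V2 : Set ↥s)
    (hpart : IsF2FPartOn (G.induce s) Set.univ V1 V2) :
    ∃ A B : Set V, A ∪ B = s ∧ Disjoint A B ∧ CycFree G A ∧ CycFree G B ∧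
      (∀ x ∈ A, nd G A x ≤ 2) := by
  obtain ⟨hu, hd, ha1, hdeg, ha2⟩ := hpart
  have key : ∀ (W : Set ↥s), ((G.induce s).induce W).IsAcyclic → CycFree G (Subtype.val '' W) := by
    intro W hW
    intro x c hc hS
    have hsub : ∀ z ∈ c.support, z ∈ s := by
      intro z hz
      obtain ⟨z', hz', rfl⟩ := hS z hz
      exact z'.2
    have hx := hsub _ c.start_mem_support
    have hlift : ((liftW G s c hx hx hsub).map (valHom G s)).IsCycle := by
      rwa [liftW_map]
    have hc' := (Walk.map_isCycle_iff_of_injective (Subtype.val_injective)).mp hlift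
    refine (acy_iff_cycFree (G.induce s) W).mp hW _ _ hc' ?_
    intro z hz
    have : z.val ∈ c.support := by
      rw [← liftW_support G s c hx hx hsub]
      exact List.mem_map_of_mem hz
    obtain ⟨z', hz', hzz⟩ := hS _ this
    rwa [show z' = z from Subtype.val_injective hzz] at hz'
  refine ⟨Subtype.val '' V1, Subtype.val '' V2, ?_, ?_, key _ ha1, key _ ha2, ?_⟩
  · rw [← Set.image_union, hu, Set.image_univ, Subtype.range_coe]
  · exact (Set.disjoint_image_iff Subtype.val_injective).mpr hd
  · rintro x ⟨⟨x, hxs⟩, hx1, rfl⟩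
    have h2 := hdeg ⟨⟨x, hxs⟩, hx1⟩
    rw [ndeg_eq (G.induce s) V1 _ hx1] at h2
    refine le_trans (le_of_eq ?_) h2
    unfold nd
    rw [← Set.ncard_image_of_injective (nset (G.induce s) V1 ⟨x, hxs⟩)
      (Subtype.val_injective (p := (· ∈ s)))]
    congr 1
    ext y
    simp only [Set.mem_image, mem_nset]
    constructor
    · rintro ⟨⟨y', hy', rfl⟩, hadj⟩
      refine ⟨y', ⟨hy', ?_⟩, rfl⟩
      exact hadj
    · rintro ⟨y', ⟨hy', hadj⟩, rfl⟩
      exact ⟨⟨y', hy', rfl⟩, hadj⟩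

lemma cycFree_mono {S T : Set V} (hST : S ⊆ T) (hT : CycFree G T) : CycFree G S :=
  fun x c hc hsupp => hT x c hc (fun z hz => hST (hsupp z hz))

lemma conn_symm {S : Set V} {x y : V} (h : Conn G S x y) : Conn G S y x := by
  obtain ⟨w, hw⟩ := h
  exact ⟨w.reverse, by intro z hz; rw [Walk.support_reverse, List.mem_reverse] at hz; exact hw z hz⟩

lemma cycFree_insert [DecidableEq V] {a : V} {S : Set V} (ha : a ∉ S) (hS : CycFree G S)
    (h : ∀ p q, p ∈ nset G S a → q ∈ nset G S a → p ≠ q → ¬ Conn G S p q) :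
    CycFree G (insert a S) := by
  have key : ∀ (d : G.Walk a a), d.IsCycle → (∀ z ∈ d.support, z ∈ insert a S) → False := by
    intro d hd hdsupp
    cases d with
    | nil => exact hd.ne_nil rfl
    | @cons _ b _ hab d' =>
      have hb : b ∈ S := by
        have := hdsupp b (by simp [Walk.support_cons])
        rcases this with h' | h'
        · exact absurd h'.symm hab.ne
        · exact h'
      have hnodup : d'.support.Nodup := by
        have := hd.2
        simpa [Walk.support_cons] using this
      obtain ⟨q, haq, e, he⟩ := Walk.exists_eq_cons_of_ne hab.ne d'.reverse
      have hsupp_rev : d'.support.reverse = a :: e.support := by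
        rw [← Walk.support_reverse, he, Walk.support_cons]
      have hanotin : a ∉ e.support := by
        have : (a :: e.support).Nodup := by
          rw [← hsupp_rev]; exact List.nodup_reverse.mpr hnodup
        exact (List.nodup_cons.mp this).1
      have hesub : ∀ z ∈ e.support, z ∈ S := by
        intro z hz
        have hzd : z ∈ d'.support := by
          rw [← List.mem_reverse, hsupp_rev]; exact List.mem_cons_of_mem _ hz
        have := hdsupp z (by rw [Walk.support_cons]; exact List.mem_cons_of_mem _ hzd)
        rcases this with h' | h'
        · exact absurd (h' ▸ hz) hanotin
        · exact h'
      have hq : q ∈ S := by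
        have : q ∈ e.support := e.start_mem_support
        exact hesub q this
      have hbq : b ≠ q := by
        intro heq
        have hedges : (Walk.cons hab d').edges.Nodup := hd.edges_nodup
        rw [Walk.edges_cons, List.nodup_cons] at hedges
        apply hedges.1
        have : s(a, q) ∈ d'.reverse.edges := by rw [he, Walk.edges_cons]; exact List.mem_cons_self
        rw [Walk.edges_reverse, List.mem_reverse] at this
        simpa [heq] using this
      exact h b q ⟨hb, hab⟩ ⟨hq, haq⟩ hbq (conn_symm G ⟨e, hesub⟩)
  intro x c hc hsupp
  by_cases hax : a ∈ c.support
  · have hd := hc.rotate hax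
    refine key (c.rotate a hax) hd ?_
    intro z hz
    rw [Walk.support_eq_cons, List.mem_cons] at hz
    rcases hz with rfl | hz
    · exact Set.mem_insert _ _
    · exact hsupp z (List.mem_of_mem_tail (((Walk.support_rotate c a hax).mem_iff).mp hz))
  · refine hS x c hc ?_
    intro z hz
    rcases hsupp z hz with h' | h'
    · exact absurd (h' ▸ hz) hax
    · exact h'

lemma cycFree_insert_sing [DecidableEq V] {a b : V} {S : Set V} (ha : a ∉ S) (hS : CycFree G S)
    (hone : nset G S a ⊆ {b}) :
    CycFree G (insert a S) :=
  cycFree_insert G ha hS (fun p q hp hq hne _ => hne (by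
    have hp' := hone hp; have hq' := hone hq
    rw [Set.mem_singleton_iff] at hp' hq'; rw [hp', hq']))

lemma conn_from_insert [DecidableEq V] {a c r : V} {S : Set V} (_ha : a ∉ S)
    (hsub : ∀ y, y ∈ nset G S a → y = c) (hr : r ∈ S)
    (hconn : Conn G (insert a S) a r) : c ∈ S ∧ Conn G S c r := by
  obtain ⟨w, hw⟩ := hconn
  have hp : w.bypass.IsPath := Walk.bypass_isPath w
  have hpsub : ∀ z ∈ w.bypass.support, z ∈ insert a S :=
    fun z hz => hw z (Walk.support_bypass_subset w hz)
  have har : a ≠ r := fun h => _ha (h ▸ hr)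
  obtain ⟨y, hay, e, he⟩ := Walk.exists_eq_cons_of_ne har w.bypass
  have hy : y ∈ S := by
    have : y ∈ w.bypass.support := by rw [he, Walk.support_cons]; simp
    rcases hpsub y this with h' | h'
    · exact absurd h'.symm hay.ne
    · exact h'
  have hyc : y = c := hsub y ⟨hy, hay⟩
  have hanotin : a ∉ e.support := by
    have hnd := hp.support_nodup
    rw [he, Walk.support_cons, List.nodup_cons] at hnd
    exact hnd.1
  have hesub : ∀ z ∈ e.support, z ∈ S := by
    intro z hz
    have : z ∈ w.bypass.support := by
      rw [he, Walk.support_cons]; exact List.mem_cons_of_mem _ hz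
    rcases hpsub z this with h' | h'
    · exact absurd (h' ▸ hz) hanotin
    · exact h'
  subst hyc
  exact ⟨hy, ⟨e, hesub⟩⟩

section Fin
variable [Fintype V]

lemma nd_mono {S T : Set V} (hST : S ⊆ T) (x : V) : nd G S x ≤ nd G T x :=
  Set.ncard_le_ncard (fun y hy => ⟨hST hy.1, hy.2⟩) (Set.toFinite _)

lemma nset_insert_subset {a : V} {S : Set V} (x : V) :
    nset G (insert a S) x ⊆ insert a (nset G S x) := by
  rintro y ⟨hy | hy, hadj⟩
  · exact Or.inl hy
  · exact Or.inr ⟨hy, hadj⟩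

lemma nd_insert_le {a : V} {S : Set V} (x : V) : nd G (insert a S) x ≤ nd G S x + 1 :=
  le_trans (Set.ncard_le_ncard (nset_insert_subset G x) (Set.toFinite _)) (Set.ncard_insert_le _ _)

lemma nd_insert_of_not_adj {a : V} {S : Set V} {x : V} (h : ¬ G.Adj x a) :
    nd G (insert a S) x = nd G S x := by
  unfold nd
  congr 1
  ext y
  simp only [mem_nset, Set.mem_insert_iff]
  constructor
  · rintro ⟨rfl | hy, hadj⟩
    · exact absurd hadj h
    · exact ⟨hy, hadj⟩
  · rintro ⟨hy, hadj⟩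
    exact ⟨Or.inr hy, hadj⟩

lemma nd_le_one {b : V} {S : Set V} {x : V} (h : nset G S x ⊆ {b}) : nd G S x ≤ 1 :=
  le_trans (Set.ncard_le_ncard h (Set.toFinite _)) (by simp)

lemma nd_le_two {b c : V} {S : Set V} {x : V} (h : nset G S x ⊆ {b, c}) : nd G S x ≤ 2 :=
  le_trans (Set.ncard_le_ncard h (Set.toFinite _))
    (le_trans (Set.ncard_insert_le _ _) (by simp))

lemma nd_add_le (A B : Set V) (x : V) (hd : Disjoint A B) (T : Finset V)
    (hA : nset G A x ⊆ ↑T) (hB : nset G B x ⊆ ↑T) :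
    nd G A x + nd G B x ≤ T.card := by
  have hdis : Disjoint (nset G A x) (nset G B x) :=
    Set.disjoint_of_subset (fun y hy => hy.1) (fun y hy => hy.1) hd
  rw [nd, nd, ← Set.ncard_union_eq hdis (Set.toFinite _) (Set.toFinite _)]
  rw [← Set.ncard_coe_finset T]
  exact Set.ncard_le_ncard (Set.union_subset hA hB) (Set.toFinite _)

end Fin

lemma no_c4 (h4 : NoCycleLen G 4) {a b c d : V} (hab : G.Adj a b) (hbc : G.Adj b c)
    (hcd : G.Adj c d) (hda : G.Adj d a) (hac : a ≠ c) (hbd : b ≠ d) : False := by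
  have hcyc : (Walk.cons hab (Walk.cons hbc (Walk.cons hcd (Walk.cons hda Walk.nil)))).IsCycle := by
    rw [Walk.isCycle_def]
    refine ⟨?_, by simp, ?_⟩
    · rw [Walk.isTrail_def]
      simp only [Walk.edges_cons, Walk.edges_nil, List.nodup_cons, List.mem_cons,
        List.not_mem_nil, or_false, List.nodup_nil, and_true, Sym2.eq, Sym2.rel_iff',
        Prod.mk.injEq, Prod.swap_prod_mk, not_or]
      have h1 := hab.ne; have h2 := hbc.ne; have h3 := hcd.ne; have h4' := hda.ne
      tauto
    · simp only [Walk.support_cons, Walk.support_nil, List.tail_cons, List.nodup_cons,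
        List.mem_cons, List.not_mem_nil, or_false, List.nodup_nil, and_true, not_or]
      have h1 := hab.ne; have h2 := hbc.ne; have h3 := hcd.ne; have h4' := hda.ne
      tauto
  exact h4 a _ hcyc (by simp [Walk.length_cons])

end Aux

set_option maxHeartbeats 4000000

theorem five_vertex_not_on_poor_face {V : Type} [Fintype V] [DecidableEq V]
    (G : SimpleGraph V) [DecidableRel G.Adj] (E : PlaneEmbedding G)
    (h4 : NoCycleLen G 4) (h6 : NoCycleLen G 6)
    (hno : ¬ ∃ V1 V2 : Set V, IsF2FPartOn G Set.univ V1 V2)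
    (hmin : ∀ s : Set V, s ≠ Set.univ →
      ∃ V1 V2 : Set ↥s, IsF2FPartOn (G.induce s) Set.univ V1 V2) :
    ∀ v : V, G.degree v = 5 → ∀ f : E.Face, E.PoorFace f → ¬ E.IncidentVF v f := by
  classical
  intro v hv5 f hpf hvf
  obtain ⟨hlen, u1, u2, hu12, ⟨hdu1, hiu1, w1, haw1, hniw1, hdw1⟩,
    ⟨hdu2, hiu2, w2, haw2, hniw2, hdw2⟩⟩ := hpf
  -- distinctness
  have hvu1 : v ≠ u1 := fun h => by rw [h, hdu1] at hv5; omega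
  have hvu2 : v ≠ u2 := fun h => by rw [h, hdu2] at hv5; omega
  have hw1v : w1 ≠ v := fun h => hniw1 (h ▸ hvf)
  have hw1u1 : w1 ≠ u1 := fun h => hniw1 (h ▸ hiu1)
  have hw1u2 : w1 ≠ u2 := fun h => hniw1 (h ▸ hiu2)
  have hw2v : w2 ≠ v := fun h => hniw2 (h ▸ hvf)
  have hw2u1 : w2 ≠ u1 := fun h => hniw2 (h ▸ hiu1)
  have hw2u2 : w2 ≠ u2 := fun h => hniw2 (h ▸ hiu2)
  -- triangle
  obtain ⟨a, b, c, habc⟩ := List.length_eq_three.mp hlen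
  have hch := E.boundary_walk f
  rw [habc] at hch
  simp only [List.Chain', List.take_cons, List.take_nil, List.cons_append, List.nil_append,
    List.isChain_cons_cons, List.take, List.isChain_singleton, and_true] at hch
  obtain ⟨hab, hbc, hca⟩ := hch
  have hvmem : v ∈ [a, b, c] := habc ▸ hvf
  have hu1mem : u1 ∈ [a, b, c] := habc ▸ hiu1
  have hu2mem : u2 ∈ [a, b, c] := habc ▸ hiu2
  simp only [List.mem_cons, List.not_mem_nil, or_false] at hvmem hu1mem hu2mem
  have htri : G.Adj v u1 ∧ G.Adj v u2 ∧ G.Adj u1 u2 := by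
    rcases hvmem with rfl | rfl | rfl <;> rcases hu1mem with rfl | rfl | rfl <;>
      rcases hu2mem with rfl | rfl | rfl <;>
      first
        | exact absurd rfl hvu1
        | exact absurd rfl hvu2
        | exact absurd rfl hu12
        | exact ⟨by first | assumption | exact hab.symm | exact hbc.symm | exact hca.symm,
                 by first | assumption | exact hab.symm | exact hbc.symm | exact hca.symm,
                 by first | assumption | exact hab.symm | exact hbc.symm | exact hca.symm⟩
  obtain ⟨hadjv1, hadjv2, hadj12⟩ := htri
  -- non-adjacencies from 4-cycle-freeness
  have hnadj21 : ¬ G.Adj u2 w1 := fun hadj =>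
    no_c4 G h4 hadjv1 haw1 hadj.symm hadjv2.symm hw1v.symm hu12
  have hnadj12 : ¬ G.Adj u1 w2 := fun hadj =>
    no_c4 G h4 hadjv2 haw2 hadj.symm hadjv1.symm hw2v.symm hu12.symm
  have hw12 : w1 ≠ w2 := fun h => hnadj21 (h ▸ haw2)
  -- neighbor sets of u1 and u2
  have hvw1 : v ≠ w1 := hw1v.symm
  have hvw2 : v ≠ w2 := hw2v.symm
  have hNu1 : G.neighborFinset u1 = {v, u2, w1} := by
    symm
    apply Finset.eq_of_subset_of_card_le
    · intro x hx
      simp only [Finset.mem_insert, Finset.mem_singleton] at hx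
      rcases hx with rfl | rfl | rfl <;> rw [SimpleGraph.mem_neighborFinset]
      · exact hadjv1.symm
      · exact hadj12
      · exact haw1
    · rw [SimpleGraph.card_neighborFinset_eq_degree, hdu1]
      rw [Finset.card_insert_of_notMem (by simp [hvu2, hvw1]),
        Finset.card_insert_of_notMem (by simp [hw1u2.symm]), Finset.card_singleton]
  have hNu2 : G.neighborFinset u2 = {v, u1, w2} := by
    symm
    apply Finset.eq_of_subset_of_card_le
    · intro x hx
      simp only [Finset.mem_insert, Finset.mem_singleton] at hx
      rcases hx with rfl | rfl | rfl <;> rw [SimpleGraph.mem_neighborFinset]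
      · exact hadjv2.symm
      · exact hadj12.symm
      · exact haw2
    · rw [SimpleGraph.card_neighborFinset_eq_degree, hdu2]
      rw [Finset.card_insert_of_notMem (by simp [hvu1, hvw2]),
        Finset.card_insert_of_notMem (by simp [hw2u1.symm]), Finset.card_singleton]
  have hAdju1 : ∀ x, G.Adj u1 x → x = v ∨ x = u2 ∨ x = w1 := by
    intro x hx
    have : x ∈ G.neighborFinset u1 := (SimpleGraph.mem_neighborFinset G u1 x).mpr hx
    rw [hNu1] at this
    simpa using this
  have hAdju2 : ∀ x, G.Adj u2 x → x = v ∨ x = u1 ∨ x = w2 := by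
    intro x hx
    have : x ∈ G.neighborFinset u2 := (SimpleGraph.mem_neighborFinset G u2 x).mpr hx
    rw [hNu2] at this
    simpa using this
  -- the vertex set s
  set s : Set V := {x | x ≠ u1 ∧ x ≠ u2} with hs_def
  have hu1s : u1 ∉ s := fun h => h.1 rfl
  have hu2s : u2 ∉ s := fun h => h.2 rfl
  have hvs : v ∈ s := ⟨hvu1, hvu2⟩
  have hw1s : w1 ∈ s := ⟨hw1u1, hw1u2⟩
  have hw2s : w2 ∈ s := ⟨hw2u1, hw2u2⟩
  have hsne : s ≠ Set.univ := by
    intro h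
    exact hu1s (h ▸ Set.mem_univ u1)
  obtain ⟨P1, P2, hpart⟩ := hmin s hsne
  obtain ⟨A, B, hAB, hdAB, hcfA, hcfB, hdegA⟩ := trans_part G P1 P2 hpart
  have hclose : ∀ A' B' : Set V, A' ∪ B' = Set.univ → Disjoint A' B' → CycFree G A' →
      (∀ y ∈ A', nd G A' y ≤ 2) → CycFree G B' → False := by
    intro A' B' hu hd h1 h2 h3
    refine hno ⟨A', B', hu, hd, (acy_iff_cycFree G A').mpr h1, ?_, (acy_iff_cycFree G B').mpr h3⟩
    rintro ⟨x, hx⟩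
    rw [ndeg_eq G A' x hx]
    exact h2 x hx
  have hcov : ∀ z : V, z = u1 ∨ z = u2 ∨ z ∈ s := by
    intro z
    by_cases h1 : z = u1
    · exact Or.inl h1
    by_cases h2 : z = u2
    · exact Or.inr (Or.inl h2)
    · exact Or.inr (Or.inr ⟨h1, h2⟩)
  -- counting facts
  have hCNTv : ∀ A' B' : Set V, Disjoint A' B' → A' ⊆ s → B' ⊆ s →
      nd G A' v + nd G B' v ≤ 3 := by
    intro A' B' hd hA hB
    have hTcard : (G.neighborFinset v \ {u1, u2}).card = 3 := by
      rw [Finset.card_sdiff_of_subset (by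
        intro x hx
        simp only [Finset.mem_insert, Finset.mem_singleton] at hx
        rcases hx with rfl | rfl <;> rw [SimpleGraph.mem_neighborFinset] <;> assumption)]
      rw [SimpleGraph.card_neighborFinset_eq_degree, hv5,
        Finset.card_insert_of_notMem (by simp [hu12]), Finset.card_singleton]
    rw [← hTcard]
    refine nd_add_le G A' B' v hd _ ?_ ?_ <;>
      · intro y hy
        obtain ⟨hyin, hyadj⟩ := hy
        have hys := by first | exact hA hyin | exact hB hyin
        simp only [Finset.coe_sdiff, Set.mem_diff, Finset.coe_insert, Finset.mem_coe,
          Set.mem_insert_iff, Finset.mem_singleton, Finset.coe_singleton, Set.mem_singleton_iff]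
        refine ⟨by simp only [Finset.mem_coe, SimpleGraph.mem_neighborFinset]; exact hyadj, by
          push_neg
          exact ⟨hys.1, hys.2⟩⟩
  have hCNTw : ∀ (w u : V), G.Adj w u → G.degree w ≤ 4 → u = u1 ∨ u = u2 →
      ∀ A' B' : Set V, Disjoint A' B' → A' ⊆ s → B' ⊆ s →
      nd G A' w + nd G B' w ≤ 3 := by
    intro w u hadj hdeg hu12' A' B' hd hA hB
    have hTcard : (G.neighborFinset w \ {u}).card ≤ 3 := by
      rw [Finset.card_sdiff_of_subset (by
        intro x hx
        simp only [Finset.mem_singleton] at hx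
        rw [hx, SimpleGraph.mem_neighborFinset]; exact hadj)]
      rw [SimpleGraph.card_neighborFinset_eq_degree, Finset.card_singleton]
      omega
    refine le_trans (nd_add_le G A' B' w hd _ ?_ ?_) hTcard <;>
      · intro y hy
        obtain ⟨hyin, hyadj⟩ := hy
        have hys := by first | exact hA hyin | exact hB hyin
        simp only [Finset.coe_sdiff, Set.mem_diff, Finset.coe_singleton,
          Set.mem_singleton_iff]
        refine ⟨by simp only [Finset.mem_coe, SimpleGraph.mem_neighborFinset]; exact hyadj, ?_⟩
        rcases hu12' with rfl | rfl
        · exact hys.1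
        · exact hys.2
  -- move lemma
  have hmove : ∀ (A' B' : Set V) (x : V), A' ∪ B' = s → Disjoint A' B' → CycFree G A' →
      CycFree G B' → (∀ y ∈ A', nd G A' y ≤ 2) → x ∈ A' → nd G B' x ≤ 1 →
      (A' \ {x}) ∪ insert x B' = s ∧ Disjoint (A' \ {x}) (insert x B') ∧
        CycFree G (A' \ {x}) ∧ CycFree G (insert x B') ∧
        (∀ y ∈ A' \ {x}, nd G (A' \ {x}) y ≤ 2) := by
    intro A' B' x hu hd hcA hcB hdeg hxA hnd
    have hxB : x ∉ B' := fun h => (Set.disjoint_left.mp hd hxA) h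
    refine ⟨?_, ?_, ?_, ?_, ?_⟩
    · rw [← hu]
      ext z
      simp only [Set.mem_union, Set.mem_diff, Set.mem_singleton_iff, Set.mem_insert_iff]
      by_cases hz : z = x
      · subst hz; tauto
      · tauto
    · rw [Set.disjoint_left]
      rintro z ⟨hzA, hzx⟩ hz
      rcases hz with rfl | hzB
      · exact hzx rfl
      · exact Set.disjoint_left.mp hd hzA hzB
    · exact cycFree_mono G Set.diff_subset hcA
    · obtain ⟨bb, hbb⟩ : ∃ bb, nset G B' x ⊆ {bb} := by
        rcases Set.eq_empty_or_nonempty (nset G B' x) with he | ⟨bb, hbb⟩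
        · exact ⟨x, by rw [he]; exact Set.empty_subset _⟩
        · refine ⟨bb, ?_⟩
          intro y hy
          rw [Set.mem_singleton_iff]
          by_contra hne
          have h2 : 1 < (nset G B' x).ncard := (Set.one_lt_ncard (Set.toFinite _)).mpr ⟨y, hy, bb, hbb, hne⟩
          unfold nd at hnd
          omega
      exact cycFree_insert_sing G hxB hcB hbb
    · intro y hy
      exact le_trans (nd_mono G Set.diff_subset y) (hdeg y hy.1)
  have hsubA : A ⊆ s := hAB ▸ Set.subset_union_left
  have hsubB : B ⊆ s := hAB ▸ Set.subset_union_right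
  have hu1A : u1 ∉ A := fun h => hu1s (hsubA h)
  have hu2A : u2 ∉ A := fun h => hu2s (hsubA h)
  have hu1B : u1 ∉ B := fun h => hu1s (hsubB h)
  have hu2B : u2 ∉ B := fun h => hu2s (hsubB h)
  have hvAB : v ∈ A ∪ B := hAB.symm ▸ hvs
  have hUnion : ∀ C D : Set V, C ∪ D = s → (insert u1 C ∪ insert u2 D) = Set.univ := by
    intro C D h
    apply Set.eq_univ_of_forall
    intro z
    rcases hcov z with rfl | rfl | hz
    · exact Or.inl (Set.mem_insert _ _)
    · exact Or.inr (Set.mem_insert _ _)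
    · rw [← h] at hz
      rcases hz with hz | hz
      · exact Or.inl (Set.mem_insert_of_mem _ hz)
      · exact Or.inr (Set.mem_insert_of_mem _ hz)
  have hUnionL : ∀ C D : Set V, C ∪ D = s → (insert u1 (insert u2 C) ∪ D) = Set.univ := by
    intro C D h
    apply Set.eq_univ_of_forall
    intro z
    rcases hcov z with rfl | rfl | hz
    · exact Or.inl (Set.mem_insert _ _)
    · exact Or.inl (Set.mem_insert_of_mem _ (Set.mem_insert _ _))
    · rw [← h] at hz
      rcases hz with hz | hz
      · exact Or.inl (Set.mem_insert_of_mem _ (Set.mem_insert_of_mem _ hz))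
      · exact Or.inr hz
  have hUnionR : ∀ C D : Set V, C ∪ D = s → (C ∪ insert u1 (insert u2 D)) = Set.univ := by
    intro C D h
    rw [Set.union_comm]
    exact hUnionL D C (by rw [Set.union_comm]; exact h)
  have hDisj2 : ∀ C D : Set V, C ⊆ s → D ⊆ s → Disjoint C D →
      Disjoint (insert u1 C) (insert u2 D) := by
    intro C D hC hD hd
    rw [Set.disjoint_left]
    intro z hz hzD
    rcases hz with rfl | hz
    · rcases hzD with h | h
      · exact hu12 h
      · exact hu1s (hD h)
    · rcases hzD with rfl | h
      · exact hu2s (hC hz)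
      · exact Set.disjoint_left.mp hd hz h
  have hDisjL : ∀ C D : Set V, C ⊆ s → D ⊆ s → Disjoint C D →
      Disjoint (insert u1 (insert u2 C)) D := by
    intro C D hC hD hd
    rw [Set.disjoint_left]
    intro z hz hzD
    rcases hz with rfl | rfl | hz
    · exact hu1s (hD hzD)
    · exact hu2s (hD hzD)
    · exact Set.disjoint_left.mp hd hz hzD
  have hDisjR : ∀ C D : Set V, C ⊆ s → D ⊆ s → Disjoint C D →
      Disjoint C (insert u1 (insert u2 D)) := by
    intro C D hC hD hd
    exact (hDisjL D C hD hC hd.symm).symm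
  rcases hvAB with hvA | hvB
  · -- v ∈ A
    have hvB : v ∉ B := fun h => Set.disjoint_left.mp hdAB hvA h
    by_cases hcb : w1 ∈ B ∧ w2 ∈ B ∧ Conn G B w1 w2
    · by_cases hdv : nd G A v ≤ 1
      · -- CASE II : u1 → A, u2 → B
        refine hclose (insert u1 A) (insert u2 B) (hUnion A B hAB)
          (hDisj2 A B hsubA hsubB hdAB) ?_ ?_ ?_
        · refine cycFree_insert_sing G (b := v) hu1A hcfA ?_
          rintro y ⟨hyA, hyadj⟩
          rcases hAdju1 y hyadj with rfl | rfl | rfl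
          · rfl
          · exact absurd hyA hu2A
          · exact absurd hyA (fun h => Set.disjoint_left.mp hdAB h hcb.1)
        · intro y hy
          rcases hy with rfl | hyA
          · refine le_trans (nd_le_one G (b := v) ?_) (by omega)
            rintro z ⟨hz, hzadj⟩
            rcases hz with rfl | hzA
            · exact absurd hzadj (G.loopless.irrefl _)
            · rcases hAdju1 z hzadj with rfl | rfl | rfl
              · rfl
              · exact absurd hzA hu2A
              · exact absurd hzA (fun h => Set.disjoint_left.mp hdAB h hcb.1)
          · by_cases hadj : G.Adj y u1
            · have hyv : y = v := by
                rcases hAdju1 y hadj.symm with rfl | rfl | rfl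
                · rfl
                · exact absurd hyA hu2A
                · exact absurd hyA (fun h => Set.disjoint_left.mp hdAB h hcb.1)
              subst hyv
              exact le_trans (nd_insert_le G y) (by omega)
            · rw [nd_insert_of_not_adj G hadj]
              exact hdegA y hyA
        · refine cycFree_insert_sing G (b := w2) hu2B hcfB ?_
          rintro y ⟨hyB, hyadj⟩
          rcases hAdju2 y hyadj with rfl | rfl | rfl
          · exact absurd hyB hvB
          · exact absurd hyB hu1B
          · rfl
      · -- CASE III : move v to B, then u1,u2 → A
        have hndBv : nd G B v ≤ 1 := by
          have := hCNTv A B hdAB hsubA hsubB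
          omega
        obtain ⟨h1, h2, h3, h4', h5⟩ := hmove A B v hAB hdAB hcfA hcfB hdegA hvA hndBv
        have hw1A3 : w1 ∉ A \ {v} := fun h => Set.disjoint_left.mp hdAB h.1 hcb.1
        have hw2A3 : w2 ∉ A \ {v} := fun h => Set.disjoint_left.mp hdAB h.1 hcb.2.1
        have hvA3 : v ∉ A \ {v} := fun h => h.2 rfl
        have hu1A3 : u1 ∉ A \ {v} := fun h => hu1A h.1
        have hu2A3 : u2 ∉ A \ {v} := fun h => hu2A h.1
        have hsubA3 : A \ {v} ⊆ s := fun z hz => hsubA hz.1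
        have hsubB3 : insert v B ⊆ s := by
          rintro z (rfl | hz)
          · exact hvs
          · exact hsubB hz
        have hcA3u2 : CycFree G (insert u2 (A \ {v})) := by
          refine cycFree_insert_sing G (b := w2) hu2A3 h3 ?_
          rintro y ⟨hyA, hyadj⟩
          rcases hAdju2 y hyadj with rfl | rfl | rfl
          · exact absurd hyA hvA3
          · exact absurd hyA hu1A3
          · exact absurd hyA hw2A3
        have hu1ins : u1 ∉ insert u2 (A \ {v}) := by
          rintro (rfl | h)
          · exact hu12 rfl
          · exact hu1A3 h
        refine hclose (insert u1 (insert u2 (A \ {v}))) (insert v B)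
          (hUnionL _ _ h1) (hDisjL _ _ hsubA3 hsubB3 h2) ?_ ?_ h4'
        · refine cycFree_insert_sing G (b := u2) hu1ins hcA3u2 ?_
          rintro y ⟨hy, hyadj⟩
          rcases hy with rfl | hyA
          · rfl
          · rcases hAdju1 y hyadj with rfl | rfl | rfl
            · exact absurd hyA hvA3
            · exact absurd hyA hu2A3
            · exact absurd hyA hw1A3
        · intro y hy
          rcases hy with rfl | rfl | hyA
          · refine le_trans (nd_le_one G (b := u2) ?_) (by omega)
            rintro z ⟨hz, hzadj⟩
            rcases hz with rfl | rfl | hzA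
            · exact absurd hzadj (G.loopless.irrefl _)
            · rfl
            · rcases hAdju1 z hzadj with rfl | rfl | rfl
              · exact absurd hzA hvA3
              · exact absurd hzA hu2A3
              · exact absurd hzA hw1A3
          · refine le_trans (nd_le_one G (b := u1) ?_) (by omega)
            rintro z ⟨hz, hzadj⟩
            rcases hz with rfl | rfl | hzA
            · rfl
            · exact absurd hzadj (G.loopless.irrefl _)
            · rcases hAdju2 z hzadj with rfl | rfl | rfl
              · exact absurd hzA hvA3
              · exact absurd hzA hu1A3
              · exact absurd hzA hw2A3
          · have hnadj1 : ¬ G.Adj y u1 := by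
              intro hadj
              rcases hAdju1 y hadj.symm with rfl | rfl | rfl
              · exact hvA3 hyA
              · exact hu2A3 hyA
              · exact hw1A3 hyA
            have hnadj2 : ¬ G.Adj y u2 := by
              intro hadj
              rcases hAdju2 y hadj.symm with rfl | rfl | rfl
              · exact hvA3 hyA
              · exact hu1A3 hyA
              · exact hw2A3 hyA
            rw [nd_insert_of_not_adj G hnadj1, nd_insert_of_not_adj G hnadj2]
            exact h5 y hyA
    · -- CASE I : u1, u2 → B
      have hcBu2 : CycFree G (insert u2 B) := by
        refine cycFree_insert_sing G (b := w2) hu2B hcfB ?_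
        rintro y ⟨hyB, hyadj⟩
        rcases hAdju2 y hyadj with rfl | rfl | rfl
        · exact absurd hyB hvB
        · exact absurd hyB hu1B
        · rfl
      have hu1ins : u1 ∉ insert u2 B := by
        rintro (rfl | h)
        · exact hu12 rfl
        · exact hu1B h
      refine hclose A (insert u1 (insert u2 B)) (hUnionR A B hAB)
        (hDisjR A B hsubA hsubB hdAB) hcfA hdegA ?_
      refine cycFree_insert G hu1ins hcBu2 ?_
      have hmem : ∀ y, y ∈ nset G (insert u2 B) u1 → y = u2 ∨ (y = w1 ∧ w1 ∈ B) := by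
        rintro y ⟨hy, hyadj⟩
        rcases hy with rfl | hyB
        · exact Or.inl rfl
        · rcases hAdju1 y hyadj with rfl | rfl | rfl
          · exact absurd hyB hvB
          · exact absurd hyB hu2B
          · exact Or.inr ⟨rfl, hyB⟩
      have hkey : w1 ∈ B → ¬ Conn G (insert u2 B) u2 w1 := by
        intro hw1B hc
        have hsub2 : ∀ y, y ∈ nset G B u2 → y = w2 := by
          rintro y ⟨hyB, hyadj⟩
          rcases hAdju2 y hyadj with rfl | rfl | rfl
          · exact absurd hyB hvB
          · exact absurd hyB hu1B
          · rfl
        obtain ⟨hw2B, hcw⟩ := conn_from_insert G hu2B hsub2 hw1B hc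
        exact hcb ⟨hw1B, hw2B, conn_symm G hcw⟩
      rintro p q hp hq hne hc
      rcases hmem p hp with rfl | ⟨rfl, hw1B⟩ <;> rcases hmem q hq with rfl | ⟨rfl, hw1B'⟩
      · exact hne rfl
      · exact hkey hw1B' hc
      · exact hkey hw1B (conn_symm G hc)
      · exact hne rfl
  · -- v ∈ B
    have hvA : v ∉ A := fun h => Set.disjoint_left.mp hdAB h hvB
    obtain ⟨A1, B1, hAB1, hd1, hcA1, hcB1, hdeg1, hvB1, hw1c1⟩ :
        ∃ A1 B1 : Set V, A1 ∪ B1 = s ∧ Disjoint A1 B1 ∧ CycFree G A1 ∧ CycFree G B1 ∧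
          (∀ y ∈ A1, nd G A1 y ≤ 2) ∧ v ∈ B1 ∧ (w1 ∈ A1 → nd G A1 w1 ≤ 1) := by
      by_cases hm : w1 ∈ A ∧ 2 ≤ nd G A w1
      · have hndB : nd G B w1 ≤ 1 := by
          have := hCNTw w1 u1 haw1.symm hdw1 (Or.inl rfl) A B hdAB hsubA hsubB
          omega
        obtain ⟨h1, h2, h3, h4', h5⟩ := hmove A B w1 hAB hdAB hcfA hcfB hdegA hm.1 hndB
        exact ⟨A \ {w1}, insert w1 B, h1, h2, h3, h4', h5,
          Set.mem_insert_of_mem _ hvB, fun h => absurd h (fun h' => h'.2 rfl)⟩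
      · push_neg at hm
        exact ⟨A, B, hAB, hdAB, hcfA, hcfB, hdegA, hvB,
          fun h => by have := hm h; omega⟩
    have hsubA1 : A1 ⊆ s := hAB1 ▸ Set.subset_union_left
    have hsubB1 : B1 ⊆ s := hAB1 ▸ Set.subset_union_right
    obtain ⟨A2, B2, hAB2, hd2, hcA2, hcB2, hdeg2, hvB2, hw1c2, hw2c2⟩ :
        ∃ A2 B2 : Set V, A2 ∪ B2 = s ∧ Disjoint A2 B2 ∧ CycFree G A2 ∧ CycFree G B2 ∧
          (∀ y ∈ A2, nd G A2 y ≤ 2) ∧ v ∈ B2 ∧ (w1 ∈ A2 → nd G A2 w1 ≤ 1) ∧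
          (w2 ∈ A2 → nd G A2 w2 ≤ 1) := by
      by_cases hm : w2 ∈ A1 ∧ 2 ≤ nd G A1 w2
      · have hndB : nd G B1 w2 ≤ 1 := by
          have := hCNTw w2 u2 haw2.symm hdw2 (Or.inr rfl) A1 B1 hd1 hsubA1 hsubB1
          omega
        obtain ⟨h1, h2, h3, h4', h5⟩ := hmove A1 B1 w2 hAB1 hd1 hcA1 hcB1 hdeg1 hm.1 hndB
        refine ⟨A1 \ {w2}, insert w2 B1, h1, h2, h3, h4', h5,
          Set.mem_insert_of_mem _ hvB1, ?_, fun h => absurd h (fun h' => h'.2 rfl)⟩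
        intro h
        exact le_trans (nd_mono G Set.diff_subset w1) (hw1c1 h.1)
      · push_neg at hm
        exact ⟨A1, B1, hAB1, hd1, hcA1, hcB1, hdeg1, hvB1, hw1c1,
          fun h => by have := hm h; omega⟩
    have hsubA2 : A2 ⊆ s := hAB2 ▸ Set.subset_union_left
    have hsubB2 : B2 ⊆ s := hAB2 ▸ Set.subset_union_right
    have hu1A2 : u1 ∉ A2 := fun h => hu1s (hsubA2 h)
    have hu2A2 : u2 ∉ A2 := fun h => hu2s (hsubA2 h)
    have hu1B2 : u1 ∉ B2 := fun h => hu1s (hsubB2 h)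
    have hu2B2 : u2 ∉ B2 := fun h => hu2s (hsubB2 h)
    have hvA2 : v ∉ A2 := fun h => Set.disjoint_left.mp hd2 h hvB2
    by_cases hconn : w1 ∈ A2 ∧ w2 ∈ A2 ∧ Conn G A2 w1 w2
    · -- CASE IV : u1 → A2, u2 → B2
      refine hclose (insert u1 A2) (insert u2 B2) (hUnion A2 B2 hAB2)
        (hDisj2 A2 B2 hsubA2 hsubB2 hd2) ?_ ?_ ?_
      · refine cycFree_insert_sing G (b := w1) hu1A2 hcA2 ?_
        rintro y ⟨hyA, hyadj⟩
        rcases hAdju1 y hyadj with rfl | rfl | rfl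
        · exact absurd hyA hvA2
        · exact absurd hyA hu2A2
        · rfl
      · intro y hy
        rcases hy with rfl | hyA
        · refine le_trans (nd_le_one G (b := w1) ?_) (by omega)
          rintro z ⟨hz, hzadj⟩
          rcases hz with rfl | hzA
          · exact absurd hzadj (G.loopless.irrefl _)
          · rcases hAdju1 z hzadj with rfl | rfl | rfl
            · exact absurd hzA hvA2
            · exact absurd hzA hu2A2
            · rfl
        · by_cases hadj : G.Adj y u1
          · have hyw : y = w1 := by
              rcases hAdju1 y hadj.symm with rfl | rfl | rfl
              · exact absurd hyA hvA2
              · exact absurd hyA hu2A2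
              · rfl
            subst hyw
            have := hw1c2 hyA
            exact le_trans (nd_insert_le G y) (by omega)
          · rw [nd_insert_of_not_adj G hadj]
            exact hdeg2 y hyA
      · refine cycFree_insert_sing G (b := v) hu2B2 hcB2 ?_
        rintro y ⟨hyB, hyadj⟩
        rcases hAdju2 y hyadj with rfl | rfl | rfl
        · rfl
        · exact absurd hyB hu1B2
        · exact absurd hyB (fun h => Set.disjoint_right.mp hd2 h hconn.2.1)
    · -- CASE V : u1, u2 → A2
      have hcA2u2 : CycFree G (insert u2 A2) := by
        refine cycFree_insert_sing G (b := w2) hu2A2 hcA2 ?_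
        rintro y ⟨hyA, hyadj⟩
        rcases hAdju2 y hyadj with rfl | rfl | rfl
        · exact absurd hyA hvA2
        · exact absurd hyA hu1A2
        · rfl
      have hu1ins : u1 ∉ insert u2 A2 := by
        rintro (rfl | h)
        · exact hu12 rfl
        · exact hu1A2 h
      refine hclose (insert u1 (insert u2 A2)) B2 (hUnionL A2 B2 hAB2)
        (hDisjL A2 B2 hsubA2 hsubB2 hd2) ?_ ?_ hcB2
      · refine cycFree_insert G hu1ins hcA2u2 ?_
        have hmem : ∀ y, y ∈ nset G (insert u2 A2) u1 → y = u2 ∨ (y = w1 ∧ w1 ∈ A2) := by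
          rintro y ⟨hy, hyadj⟩
          rcases hy with rfl | hyA
          · exact Or.inl rfl
          · rcases hAdju1 y hyadj with rfl | rfl | rfl
            · exact absurd hyA hvA2
            · exact absurd hyA hu2A2
            · exact Or.inr ⟨rfl, hyA⟩
        have hkey : w1 ∈ A2 → ¬ Conn G (insert u2 A2) u2 w1 := by
          intro hw1A hc
          have hsub2 : ∀ y, y ∈ nset G A2 u2 → y = w2 := by
            rintro y ⟨hyA, hyadj⟩
            rcases hAdju2 y hyadj with rfl | rfl | rfl
            · exact absurd hyA hvA2
            · exact absurd hyA hu1A2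
            · rfl
          obtain ⟨hw2A, hcw⟩ := conn_from_insert G hu2A2 hsub2 hw1A hc
          exact hconn ⟨hw1A, hw2A, conn_symm G hcw⟩
        rintro p q hp hq hne hc
        rcases hmem p hp with rfl | ⟨rfl, hw1A⟩ <;> rcases hmem q hq with rfl | ⟨rfl, hw1A'⟩
        · exact hne rfl
        · exact hkey hw1A' hc
        · exact hkey hw1A (conn_symm G hc)
        · exact hne rfl
      · intro y hy
        rcases hy with rfl | rfl | hyA
        · refine le_trans (nd_le_two G (b := u2) (c := w1) ?_) (by omega)
          rintro z ⟨hz, hzadj⟩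
          rcases hz with rfl | rfl | hzA
          · exact absurd hzadj (G.loopless.irrefl _)
          · exact Or.inl rfl
          · rcases hAdju1 z hzadj with rfl | rfl | rfl
            · exact absurd hzA hvA2
            · exact absurd hzA hu2A2
            · exact Or.inr rfl
        · refine le_trans (nd_le_two G (b := u1) (c := w2) ?_) (by omega)
          rintro z ⟨hz, hzadj⟩
          rcases hz with rfl | rfl | hzA
          · exact Or.inl rfl
          · exact absurd hzadj (G.loopless.irrefl _)
          · rcases hAdju2 z hzadj with rfl | rfl | rfl
            · exact absurd hzA hvA2
            · exact Or.inl rfl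
            · exact Or.inr rfl
        · by_cases hadj1 : G.Adj y u1
          · have hyw : y = w1 := by
              rcases hAdju1 y hadj1.symm with rfl | rfl | rfl
              · exact absurd hyA hvA2
              · exact absurd hyA hu2A2
              · rfl
            subst hyw
            have h1 := hw1c2 hyA
            calc nd G (insert u1 (insert u2 A2)) y ≤ nd G (insert u2 A2) y + 1 :=
                  nd_insert_le G y
              _ = nd G A2 y + 1 := by
                  rw [nd_insert_of_not_adj G (fun h => hnadj21 h.symm)]
              _ ≤ 2 := by omega
          · by_cases hadj2 : G.Adj y u2
            · have hyw : y = w2 := by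
                rcases hAdju2 y hadj2.symm with rfl | rfl | rfl
                · exact absurd hyA hvA2
                · exact absurd hyA hu1A2
                · rfl
              subst hyw
              have h1 := hw2c2 hyA
              calc nd G (insert u1 (insert u2 A2)) y = nd G (insert u2 A2) y := by
                    rw [nd_insert_of_not_adj G hadj1]
                _ ≤ nd G A2 y + 1 := nd_insert_le G y
                _ ≤ 2 := by omega
            · rw [nd_insert_of_not_adj G hadj1, nd_insert_of_not_adj G hadj2]
              exact hdeg2 y hyA
end

section
/- Let G be a graph, let v, v1, v2 form a triangle in G with deg(v1) = deg(v2) = 3, where v1 has a third neighbor v1' of degree at most 4 and v2 has a third neighbor v2' of degree at most 4, and deg(v) = 5. If G − {v1, v2} has an (F2, F)-partition and v, v1', v2' each have degree at most 3 in G − {v1, v2}, and moreover every 3⁻-vertex in the partition can be assumed to lie in V2 or to lie in V1 non-saturated, then G has an (F2, F)-partition. -/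
open SimpleGraph

variable {V : Type} {G : SimpleGraph V}

/-- No cycle of `G` has its support inside `S`. -/
def NoCycIn (G : SimpleGraph V) (S : Set V) : Prop :=
  ∀ (u : V) (w : G.Walk u u), w.IsCycle → ¬ (∀ x ∈ w.support, x ∈ S)

lemma lift_walk {S : Set V} :
    ∀ {u v : V} (p : G.Walk u v) (hu : u ∈ S) (hv : v ∈ S)
      (hp : ∀ x ∈ p.support, x ∈ S),
      ∃ q : (G.induce S).Walk ⟨u, hu⟩ ⟨v, hv⟩,
        q.map (SimpleGraph.Embedding.induce S).toHom = p := by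
  intro u v p
  induction p with
  | nil => intro hu hv _; exact ⟨SimpleGraph.Walk.nil, rfl⟩
  | @cons a b c h t ih =>
      intro hu hv hp
      have hb : b ∈ S := hp b (by simp [SimpleGraph.Walk.support_cons])
      obtain ⟨q, hq⟩ := ih hb hv (fun x hx => hp x (by simp [SimpleGraph.Walk.support_cons, hx]))
      refine ⟨SimpleGraph.Walk.cons (by exact h) q, ?_⟩
      subst hq; rfl

lemma isAcyclic_induce_of_noCycIn {S : Set V} (h : NoCycIn G S) :
    (G.induce S).IsAcyclic := by
  intro u c hc
  have hc' : (c.map (SimpleGraph.Embedding.induce S).toHom).IsCycle :=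
    hc.map Subtype.val_injective
  refine h _ _ hc' ?_
  intro x hx
  rw [SimpleGraph.Walk.support_map] at hx
  obtain ⟨y, _, rfl⟩ := List.mem_map.mp hx
  exact y.2

lemma noCycIn_of_isAcyclic_induce {S : Set V} (h : (G.induce S).IsAcyclic) :
    NoCycIn G S := by
  intro u w hw hsup
  have hu : u ∈ S := hsup u w.start_mem_support
  obtain ⟨q, hq⟩ := lift_walk w hu hu hsup
  have : q.IsCycle := by
    rw [← SimpleGraph.Walk.map_isCycle_iff_of_injective (f := (SimpleGraph.Embedding.induce S).toHom) (fun _ _ h => Subtype.val_injective h), hq]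
    exact hw
  exact h _ this

lemma noCycIn_insert [Finite V] [DecidableEq V] {S : Set V} {a : V} (ha : a ∉ S) (h : NoCycIn G S)
    (hn : (G.neighborSet a ∩ S).ncard ≤ 1) : NoCycIn G (insert a S) := by
  intro u w hw hsup
  by_cases hmem : a ∈ w.support
  · -- rotate the cycle to start at a
    set c := w.rotate a hmem with hc
    have hcyc : c.IsCycle := hw.rotate hmem
    have hcsup : ∀ x ∈ c.support, x ∈ insert a S := by
      intro x hx
      rcases (SimpleGraph.Walk.mem_support_iff _).mp hx with rfl | hx'
      · exact Set.mem_insert _ _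
      · have := (w.support_rotate a hmem).mem_iff.mp hx'
        exact hsup x (List.mem_of_mem_tail this)
    clear_value c
    cases c with
    | nil => exact hcyc.ne_nil rfl
    | @cons _ x _ hx p =>
        have hlen : 3 ≤ p.length + 1 := by
          simpa using hcyc.three_le_length
        -- last vertex before returning to a
        rcases hp : p.reverse with _ | @⟨_, y, _, hy, q⟩
        · exfalso
          have h0 : p.length = 0 := by
            simpa using congrArg SimpleGraph.Walk.length hp
          omega
        have hxS : x ∈ S := by
          have hxmem : x ∈ insert a S := hcsup x (by
            simp [SimpleGraph.Walk.support_cons, p.start_mem_support])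
          rcases hxmem with rfl | h'
          · exact absurd rfl hx.ne
          · exact h'
        have hyS : y ∈ S := by
          have : y ∈ p.support := by
            have : y ∈ p.reverse.support := by
              rw [hp]; simp [SimpleGraph.Walk.support_cons, q.start_mem_support]
            simpa [SimpleGraph.Walk.support_reverse] using this
          have hymem : y ∈ insert a S := hcsup y (by
            simp [SimpleGraph.Walk.support_cons, this])
          rcases hymem with rfl | h'
          · exact absurd rfl hy.ne
          · exact h'
        have hxy : x ≠ y := by
          intro hxyeq
          subst hxyeq
          have hnodup : (SimpleGraph.Walk.cons hx p).edges.Nodup := hcyc.edges_nodup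
          rw [SimpleGraph.Walk.edges_cons, List.nodup_cons] at hnodup
          apply hnodup.1
          have : s(a, x) ∈ p.reverse.edges := by
            rw [hp]; simp [SimpleGraph.Walk.edges_cons]
          rw [SimpleGraph.Walk.edges_reverse, List.mem_reverse] at this
          exact this
        have hsub : ({x, y} : Set V) ⊆ G.neighborSet a ∩ S := by
          intro z hz
          rcases hz with rfl | hz
          · exact ⟨hx, hxS⟩
          · rcases hz with rfl
            exact ⟨hy, hyS⟩
        have : (2 : ℕ) ≤ (G.neighborSet a ∩ S).ncard := by
          rw [← Set.ncard_pair hxy]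
          exact Set.ncard_le_ncard hsub (Set.toFinite _)
        omega
  · refine h u w hw ?_
    intro x hx
    rcases hsup x hx with rfl | h'
    · exact absurd hx hmem
    · exact h'

lemma isAcyclic_induce_insert [Finite V] [DecidableEq V] {S : Set V} {a : V} (ha : a ∉ S)
    (h : (G.induce S).IsAcyclic) (hn : (G.neighborSet a ∩ S).ncard ≤ 1) :
    (G.induce (insert a S)).IsAcyclic :=
  isAcyclic_induce_of_noCycIn (noCycIn_insert ha (noCycIn_of_isAcyclic_induce h) hn)

lemma ncard_induce_neighborSet (G : SimpleGraph V) (S : Set V) (x : V) (hx : x ∈ S) :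
    ((G.induce S).neighborSet ⟨x, hx⟩).ncard = (G.neighborSet x ∩ S).ncard := by
  have himg : Subtype.val '' ((G.induce S).neighborSet ⟨x, hx⟩) = G.neighborSet x ∩ S := by
    ext z
    simp only [Set.mem_image, SimpleGraph.mem_neighborSet, Set.mem_inter_iff]
    constructor
    · rintro ⟨⟨z', hz'⟩, hadj, rfl⟩
      exact ⟨hadj, hz'⟩
    · rintro ⟨hadj, hz⟩
      exact ⟨⟨z, hz⟩, hadj, rfl⟩
  rw [← himg, Set.ncard_image_of_injective _ Subtype.val_injective]

set_option maxHeartbeats 3000000 in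
theorem poor_triangle_partition_extension {V : Type} [Fintype V] [DecidableEq V]
    (G : SimpleGraph V) [DecidableRel G.Adj]
    (v v₁ v₂ v₁' v₂' : V)
    (h1 : G.Adj v v₁) (h2 : G.Adj v v₂) (h3 : G.Adj v₁ v₂)
    (d1 : G.degree v₁ = 3) (d2 : G.degree v₂ = 3) (dv : G.degree v = 5)
    (h1' : G.Adj v₁ v₁') (h2' : G.Adj v₂ v₂')
    (hv1' : v₁' ≠ v ∧ v₁' ≠ v₂) (hv2' : v₂' ≠ v ∧ v₂' ≠ v₁)
    (dd1 : G.degree v₁' ≤ 4) (dd2 : G.degree v₂' ≤ 4)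
    (hdeg3 : ∀ u ∈ ({v, v₁', v₂'} : Set V),
      (G.neighborSet u \ {v₁, v₂}).ncard ≤ 3)
    (hpart : ∃ V1 V2 : Set V, IsF2FPartOn G ({v₁, v₂}ᶜ : Set V) V1 V2 ∧
      ∀ u ∈ ({v, v₁', v₂'} : Set V), u ∈ V2 ∨
        (u ∈ V1 ∧ ((G.neighborSet u ∩ V1) \ {v₁, v₂}).ncard ≤ 1)) :
    ∃ W1 W2 : Set V, IsF2FPartOn G Set.univ W1 W2 := by
  obtain ⟨V1, V2, ⟨hun, hdis, hac1, hdegV1, hac2⟩, hplace⟩ := hpart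
  -- distinctness facts
  have hvne1 : v ≠ v₁ := h1.ne
  have hne1v : v₁ ≠ v := h1.ne'
  have hvne2 : v ≠ v₂ := h2.ne
  have hne2v : v₂ ≠ v := h2.ne'
  have h12 : v₁ ≠ v₂ := h3.ne
  have h21 : v₂ ≠ v₁ := h3.ne'
  have h1'ne1 : v₁' ≠ v₁ := h1'.ne'
  have h1ne1' : v₁ ≠ v₁' := h1'.ne
  have h2'ne2 : v₂' ≠ v₂ := h2'.ne'
  have h2ne2' : v₂ ≠ v₂' := h2'.ne
  have h1'nev : v₁' ≠ v := hv1'.1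
  have hvne1' : v ≠ v₁' := hv1'.1.symm
  have h1'ne2 : v₁' ≠ v₂ := hv1'.2
  have h2ne1' : v₂ ≠ v₁' := hv1'.2.symm
  have h2'nev : v₂' ≠ v := hv2'.1
  have hvne2' : v ≠ v₂' := hv2'.1.symm
  have h2'ne1 : v₂' ≠ v₁ := hv2'.2
  have h1ne2' : v₁ ≠ v₂' := hv2'.2.symm
  -- v₁, v₂ are outside V1 ∪ V2
  have hsub1 : V1 ⊆ ({v₁, v₂}ᶜ : Set V) := hun ▸ Set.subset_union_left
  have hsub2 : V2 ⊆ ({v₁, v₂}ᶜ : Set V) := hun ▸ Set.subset_union_right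
  have h1n1 : v₁ ∉ V1 := fun h => (hsub1 h) (by simp)
  have h1n2 : v₁ ∉ V2 := fun h => (hsub2 h) (by simp)
  have h2n1 : v₂ ∉ V1 := fun h => (hsub1 h) (by simp)
  have h2n2 : v₂ ∉ V2 := fun h => (hsub2 h) (by simp)
  have notinV1 : ∀ {z}, z ∈ V2 → z ∉ V1 := fun hz hz' => Set.disjoint_left.mp hdis hz' hz
  have notinV2 : ∀ {z}, z ∈ V1 → z ∉ V2 := fun hz hz' => Set.disjoint_left.mp hdis hz hz'
  -- locations of v, v₁', v₂'
  have hloc : ∀ z : V, z ≠ v₁ → z ≠ v₂ → z ∈ V1 ∨ z ∈ V2 := by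
    intro z hz1 hz2
    have : z ∈ V1 ∪ V2 := by
      rw [hun]
      simp [Set.mem_compl_iff, hz1, hz2]
    exact this
  have hvloc : v ∈ V1 ∨ v ∈ V2 := hloc v hvne1 hvne2
  have h1'loc : v₁' ∈ V1 ∨ v₁' ∈ V2 := hloc v₁' h1'ne1 h1'ne2
  have h2'loc : v₂' ∈ V1 ∨ v₂' ∈ V2 := hloc v₂' h2'ne1 h2'ne2
  -- neighborhoods of v₁ and v₂
  have hNcard : ∀ w : V, (G.neighborSet w).ncard = G.degree w := by
    intro w
    rw [Set.ncard_eq_toFinset_card', Set.toFinset_card]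
    exact G.card_neighborSet_eq_degree w
  have N1 : G.neighborSet v₁ = {v, v₂, v₁'} := by
    have hsub : ({v, v₂, v₁'} : Set V) ⊆ G.neighborSet v₁ := by
      rintro z (rfl | rfl | rfl)
      · exact h1.symm
      · exact h3
      · exact h1'
    have hc3 : ({v, v₂, v₁'} : Set V).ncard = 3 := by
      rw [Set.ncard_insert_of_notMem (by simp [hvne2, hvne1']),
        Set.ncard_pair h2ne1']
    refine (Set.eq_of_subset_of_ncard_le hsub ?_ (Set.toFinite _)).symm
    rw [hNcard, d1, hc3]
  have N2 : G.neighborSet v₂ = {v, v₁, v₂'} := by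
    have hsub : ({v, v₁, v₂'} : Set V) ⊆ G.neighborSet v₂ := by
      rintro z (rfl | rfl | rfl)
      · exact h2.symm
      · exact h3.symm
      · exact h2'
    have hc3 : ({v, v₁, v₂'} : Set V).ncard = 3 := by
      rw [Set.ncard_insert_of_notMem (by simp [hvne1, hvne2']),
        Set.ncard_pair h1ne2']
    refine (Set.eq_of_subset_of_ncard_le hsub ?_ (Set.toFinite _)).symm
    rw [hNcard, d2, hc3]
  have hxadj1 : ∀ {x : V}, G.Adj x v₁ → x = v ∨ x = v₂ ∨ x = v₁' := by
    intro x hxa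
    have hm : x ∈ G.neighborSet v₁ := hxa.symm
    rw [N1] at hm
    simpa using hm
  have hxadj2 : ∀ {x : V}, G.Adj x v₂ → x = v ∨ x = v₁ ∨ x = v₂' := by
    intro x hxa
    have hm : x ∈ G.neighborSet v₂ := hxa.symm
    rw [N2] at hm
    simpa using hm
  -- old degree bound, transported
  have hdeg' : ∀ x ∈ V1, (G.neighborSet x ∩ V1).ncard ≤ 2 := by
    intro x hx
    have := hdegV1 ⟨x, hx⟩
    rwa [ncard_induce_neighborSet] at this
  -- non-saturation
  have hnonsat : ∀ u ∈ ({v, v₁', v₂'} : Set V), u ∈ V1 →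
      (G.neighborSet u ∩ V1).ncard ≤ 1 := by
    intro u hu huV1
    rcases hplace u hu with h | ⟨_, h⟩
    · exact absurd h (notinV2 huV1)
    · have heq : (G.neighborSet u ∩ V1) \ {v₁, v₂} = G.neighborSet u ∩ V1 := by
        ext z
        simp only [Set.mem_diff, Set.mem_inter_iff, Set.mem_insert_iff,
          Set.mem_singleton_iff]
        constructor
        · tauto
        · rintro ⟨hz1, hz2⟩
          refine ⟨⟨hz1, hz2⟩, ?_⟩
          rintro (rfl | rfl)
          · exact h1n1 hz2
          · exact h2n1 hz2
      rwa [heq] at h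
  have hvmem : v ∈ ({v, v₁', v₂'} : Set V) := by simp
  have h1'mem : v₁' ∈ ({v, v₁', v₂'} : Set V) := by simp
  have h2'mem : v₂' ∈ ({v, v₁', v₂'} : Set V) := by simp
  -- small cardinality helpers
  have ncle1 : ∀ (s : Set V) (w : V), s ⊆ {w} → s.ncard ≤ 1 := by
    intro s w h
    simpa using Set.ncard_le_ncard h (Set.toFinite _)
  have hmem_all : ∀ x : V, x = v₁ ∨ x = v₂ ∨ x ∈ V1 ∨ x ∈ V2 := by
    intro x
    by_cases hx1 : x = v₁
    · tauto
    by_cases hx2 : x = v₂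
    · tauto
    rcases hloc x hx1 hx2 with h | h <;> tauto
  rcases hvloc with hv | hv
  · -- v ∈ V1 : cases D and E
    have hvn2 : v ∉ V2 := notinV2 hv
    rcases h2'loc with h2v | h2v
    · -- v₂' ∈ V1 : case E
      have h2'n2 : v₂' ∉ V2 := notinV2 h2v
      refine ⟨V1, insert v₂ (insert v₁ V2), ?_, ?_, hac1, hdegV1, ?_⟩
      · ext x
        simp only [Set.mem_union, Set.mem_insert_iff, Set.mem_univ, iff_true]
        rcases hmem_all x with rfl | rfl | h | h <;> tauto
      · rw [Set.disjoint_left]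
        intro x hx hx2
        simp only [Set.mem_insert_iff] at hx2
        rcases hx2 with rfl | rfl | h
        · exact h2n1 hx
        · exact h1n1 hx
        · exact notinV2 hx h
      · refine isAcyclic_induce_insert ?_ (isAcyclic_induce_insert h1n2 hac2 ?_) ?_
        · simp only [Set.mem_insert_iff, not_or]
          exact ⟨h21, h2n2⟩
        · apply ncle1 _ v₁'
          rw [N1]
          rintro z ⟨hz1, hz2⟩
          rcases hz1 with rfl | rfl | rfl
          · exact absurd hz2 hvn2
          · exact absurd hz2 h2n2
          · simp
        · apply ncle1 _ v₁
          rw [N2]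
          rintro z ⟨hz1, hz2⟩
          simp only [Set.mem_insert_iff] at hz2
          rcases hz1 with rfl | rfl | rfl
          · rcases hz2 with rfl | h <;> tauto
          · simp
          · rcases hz2 with rfl | h <;> tauto
    · -- v₂' ∈ V2 : case D
      have h2'n1 : v₂' ∉ V1 := notinV1 h2v
      refine ⟨insert v₂ V1, insert v₁ V2, ?_, ?_, ?_, ?_, ?_⟩
      · ext x
        simp only [Set.mem_union, Set.mem_insert_iff, Set.mem_univ, iff_true]
        rcases hmem_all x with rfl | rfl | h | h <;> tauto
      · rw [Set.disjoint_left]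
        intro x hx hx2
        simp only [Set.mem_insert_iff] at hx hx2
        rcases hx with rfl | hx
        · rcases hx2 with h | h
          · exact h21 h
          · exact h2n2 h
        · rcases hx2 with h | h
          · exact h1n1 (h ▸ hx)
          · exact notinV2 hx h
      · refine isAcyclic_induce_insert h2n1 hac1 ?_
        apply ncle1 _ v
        rw [N2]
        rintro z ⟨hz1, hz2⟩
        rcases hz1 with rfl | rfl | rfl
        · simp
        · exact absurd hz2 h1n1
        · exact absurd hz2 h2'n1
      · rintro ⟨x, hx⟩
        rw [ncard_induce_neighborSet]
        simp only [Set.mem_insert_iff] at hx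
        rcases hx with rfl | hx
        · refine le_trans (ncle1 _ v ?_) (by norm_num)
          rw [N2]
          rintro z ⟨hz1, hz2⟩
          simp only [Set.mem_insert_iff] at hz2
          rcases hz1 with rfl | rfl | rfl
          · simp
          · rcases hz2 with rfl | h <;> tauto
          · rcases hz2 with rfl | h <;> tauto
        · by_cases hxx : x = v
          · rw [hxx]
            have hb : (G.neighborSet v ∩ V1).ncard ≤ 1 := hnonsat v hvmem (hxx ▸ hx)
            have hstep : (insert v₂ (G.neighborSet v ∩ V1)).ncard ≤ 2 :=
              le_trans (Set.ncard_insert_le _ _) (by omega)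
            refine le_trans (Set.ncard_le_ncard ?_ (Set.toFinite _)) hstep
            rintro z ⟨hz1, hz2⟩
            simp only [Set.mem_insert_iff] at hz2 ⊢
            rcases hz2 with rfl | h
            · exact Or.inl rfl
            · exact Or.inr ⟨hz1, h⟩
          · refine le_trans (Set.ncard_le_ncard ?_ (Set.toFinite _)) (hdeg' x hx)
            rintro z ⟨hz1, hz2⟩
            refine ⟨hz1, ?_⟩
            simp only [Set.mem_insert_iff] at hz2
            rcases hz2 with rfl | h
            · exfalso
              rcases hxadj2 hz1 with rfl | rfl | rfl <;> tauto
            · exact h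
      · refine isAcyclic_induce_insert h1n2 hac2 ?_
        apply ncle1 _ v₁'
        rw [N1]
        rintro z ⟨hz1, hz2⟩
        rcases hz1 with rfl | rfl | rfl
        · exact absurd hz2 hvn2
        · exact absurd hz2 h2n2
        · simp
  · -- v ∈ V2
    have hvn1 : v ∉ V1 := notinV1 hv
    rcases h1'loc with h1v | h1v
    · -- v₁' ∈ V1 : case C
      have h1'n2 : v₁' ∉ V2 := notinV2 h1v
      refine ⟨insert v₂ V1, insert v₁ V2, ?_, ?_, ?_, ?_, ?_⟩
      · ext x
        simp only [Set.mem_union, Set.mem_insert_iff, Set.mem_univ, iff_true]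
        rcases hmem_all x with rfl | rfl | h | h <;> tauto
      · rw [Set.disjoint_left]
        intro x hx hx2
        simp only [Set.mem_insert_iff] at hx hx2
        rcases hx with rfl | hx
        · rcases hx2 with h | h
          · exact h21 h
          · exact h2n2 h
        · rcases hx2 with h | h
          · exact h1n1 (h ▸ hx)
          · exact notinV2 hx h
      · refine isAcyclic_induce_insert h2n1 hac1 ?_
        apply ncle1 _ v₂'
        rw [N2]
        rintro z ⟨hz1, hz2⟩
        rcases hz1 with rfl | rfl | rfl
        · exact absurd hz2 hvn1
        · exact absurd hz2 h1n1
        · simp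
      · rintro ⟨x, hx⟩
        rw [ncard_induce_neighborSet]
        simp only [Set.mem_insert_iff] at hx
        rcases hx with rfl | hx
        · refine le_trans (ncle1 _ v₂' ?_) (by norm_num)
          rw [N2]
          rintro z ⟨hz1, hz2⟩
          simp only [Set.mem_insert_iff] at hz2
          rcases hz1 with rfl | rfl | rfl
          · rcases hz2 with rfl | h <;> tauto
          · rcases hz2 with rfl | h <;> tauto
          · simp
        · by_cases hxx : x = v₂'
          · rw [hxx]
            have hb : (G.neighborSet v₂' ∩ V1).ncard ≤ 1 := hnonsat v₂' h2'mem (hxx ▸ hx)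
            have hstep : (insert v₂ (G.neighborSet v₂' ∩ V1)).ncard ≤ 2 :=
              le_trans (Set.ncard_insert_le _ _) (by omega)
            refine le_trans (Set.ncard_le_ncard ?_ (Set.toFinite _)) hstep
            rintro z ⟨hz1, hz2⟩
            simp only [Set.mem_insert_iff] at hz2 ⊢
            rcases hz2 with rfl | h
            · exact Or.inl rfl
            · exact Or.inr ⟨hz1, h⟩
          · refine le_trans (Set.ncard_le_ncard ?_ (Set.toFinite _)) (hdeg' x hx)
            rintro z ⟨hz1, hz2⟩
            refine ⟨hz1, ?_⟩
            simp only [Set.mem_insert_iff] at hz2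
            rcases hz2 with rfl | h
            · exfalso
              rcases hxadj2 hz1 with rfl | rfl | rfl <;> tauto
            · exact h
      · refine isAcyclic_induce_insert h1n2 hac2 ?_
        apply ncle1 _ v
        rw [N1]
        rintro z ⟨hz1, hz2⟩
        rcases hz1 with rfl | rfl | rfl
        · simp
        · exact absurd hz2 h2n2
        · exact absurd hz2 h1'n2
    · -- v₁' ∈ V2
      have h1'n1 : v₁' ∉ V1 := notinV1 h1v
      rcases h2'loc with h2v | h2v
      · -- v₂' ∈ V1 : case B
        have h2'n2 : v₂' ∉ V2 := notinV2 h2v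
        refine ⟨insert v₁ V1, insert v₂ V2, ?_, ?_, ?_, ?_, ?_⟩
        · ext x
          simp only [Set.mem_union, Set.mem_insert_iff, Set.mem_univ, iff_true]
          rcases hmem_all x with rfl | rfl | h | h <;> tauto
        · rw [Set.disjoint_left]
          intro x hx hx2
          simp only [Set.mem_insert_iff] at hx hx2
          rcases hx with rfl | hx
          · rcases hx2 with h | h
            · exact h12 h
            · exact h1n2 h
          · rcases hx2 with h | h
            · exact h2n1 (h ▸ hx)
            · exact notinV2 hx h
        · refine isAcyclic_induce_insert h1n1 hac1 ?_
          apply ncle1 _ v₂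
          rw [N1]
          rintro z ⟨hz1, hz2⟩
          rcases hz1 with rfl | rfl | rfl
          · exact absurd hz2 hvn1
          · exact absurd hz2 h2n1
          · exact absurd hz2 h1'n1
        · rintro ⟨x, hx⟩
          rw [ncard_induce_neighborSet]
          simp only [Set.mem_insert_iff] at hx
          rcases hx with rfl | hx
          · refine le_trans (ncle1 _ v₂ ?_) (by norm_num)
            rw [N1]
            rintro z ⟨hz1, hz2⟩
            simp only [Set.mem_insert_iff] at hz2
            rcases hz1 with rfl | rfl | rfl
            · rcases hz2 with rfl | h <;> tauto
            · simp
            · rcases hz2 with rfl | h <;> tauto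
          · refine le_trans (Set.ncard_le_ncard ?_ (Set.toFinite _)) (hdeg' x hx)
            rintro z ⟨hz1, hz2⟩
            refine ⟨hz1, ?_⟩
            simp only [Set.mem_insert_iff] at hz2
            rcases hz2 with rfl | h
            · exfalso
              rcases hxadj1 hz1 with rfl | rfl | rfl <;> tauto
            · exact h
        · refine isAcyclic_induce_insert h2n2 hac2 ?_
          apply ncle1 _ v
          rw [N2]
          rintro z ⟨hz1, hz2⟩
          rcases hz1 with rfl | rfl | rfl
          · simp
          · exact absurd hz2 h1n2
          · exact absurd hz2 h2'n2
      · -- v₂' ∈ V2 : case A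
        have h2'n1 : v₂' ∉ V1 := notinV1 h2v
        refine ⟨insert v₂ (insert v₁ V1), V2, ?_, ?_, ?_, ?_, hac2⟩
        · -- union
          ext x
          simp only [Set.mem_union, Set.mem_insert_iff, Set.mem_univ, iff_true]
          rcases hmem_all x with rfl | rfl | h | h <;> tauto
        · -- disjoint
          rw [Set.disjoint_left]
          intro x hx hx2
          simp only [Set.mem_insert_iff] at hx
          rcases hx with rfl | rfl | hx
          · exact h2n2 hx2
          · exact h1n2 hx2
          · exact notinV2 hx hx2
        · -- acyclic W1
          refine isAcyclic_induce_insert ?_ (isAcyclic_induce_insert h1n1 hac1 ?_) ?_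
          · simp only [Set.mem_insert_iff, not_or]
            exact ⟨h21, h2n1⟩
          · apply ncle1 _ v₂
            rw [N1]
            rintro z ⟨hz1, hz2⟩
            rcases hz1 with rfl | rfl | rfl
            · exact absurd hz2 hvn1
            · exact absurd hz2 h2n1
            · exact absurd hz2 h1'n1
          · apply ncle1 _ v₁
            rw [N2]
            rintro z ⟨hz1, hz2⟩
            simp only [Set.mem_insert_iff] at hz2
            rcases hz1 with rfl | rfl | rfl
            · rcases hz2 with rfl | h <;> tauto
            · simp
            · rcases hz2 with rfl | h <;> tauto
        · -- degree bound on W1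
          rintro ⟨x, hx⟩
          rw [ncard_induce_neighborSet]
          simp only [Set.mem_insert_iff] at hx
          rcases hx with rfl | rfl | hx
          · -- x = v₂
            refine le_trans (ncle1 _ v₁ ?_) (by norm_num)
            rw [N2]
            rintro z ⟨hz1, hz2⟩
            simp only [Set.mem_insert_iff] at hz2
            rcases hz1 with rfl | rfl | rfl
            · rcases hz2 with rfl | rfl | h <;> tauto
            · simp
            · rcases hz2 with rfl | rfl | h <;> tauto
          · -- x = v₁
            refine le_trans (ncle1 _ v₂ ?_) (by norm_num)
            rw [N1]
            rintro z ⟨hz1, hz2⟩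
            simp only [Set.mem_insert_iff] at hz2
            rcases hz1 with rfl | rfl | rfl
            · rcases hz2 with rfl | rfl | h <;> tauto
            · simp
            · rcases hz2 with rfl | rfl | h <;> tauto
          · -- x ∈ V1
            refine le_trans (Set.ncard_le_ncard ?_ (Set.toFinite _)) (hdeg' x hx)
            rintro z ⟨hz1, hz2⟩
            refine ⟨hz1, ?_⟩
            simp only [Set.mem_insert_iff] at hz2
            rcases hz2 with rfl | rfl | h
            · exfalso
              rcases hxadj2 hz1 with rfl | rfl | rfl <;> tauto
            · exfalso
              rcases hxadj1 hz1 with rfl | rfl | rfl <;> tauto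
            · exact h
end
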